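/- arXiv:1406.5778 — 5 statements merged into one kernel-verified Lean document; each statement's English description precedes it below -/
import Mathlib

section
/- Let K be a compact convex subset of ℝ² with nonempty interior and let w be the width of K. Then there exists a point c ∈ ℝ² such that the closed disk of radius w/(2√3) centered at c is contained in K. -/
open MeasureTheory Pointwise
open scoped RealInnerProductSpace Topology

noncomputable section

abbrev Plane := EuclideanSpace ℝ (Fin 2)

/-- The width of a set `K ⊆ ℝ²`: the infimum over unit vectors `u` of the
extent of `K` in the direction `u`. -/
noncomputable def width (K : Set Plane) : ℝ :=
  sInf {w : ℝ | ∃ u : Plane, ‖u‖ = 1 ∧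
    w = sSup ((fun p => (inner ℝ p u : ℝ)) '' K) - sInf ((fun p => (inner ℝ p u : ℝ)) '' K)}

namespace WidthToInnerBall

/-- Support function of `K` in direction `u`. -/
def sfun (K : Set Plane) (u : Plane) : ℝ := sSup ((fun p => (inner ℝ p u : ℝ)) '' K)

lemma bddAbove_img {K : Set Plane} (hK : IsCompact K) (u : Plane) :
    BddAbove ((fun p => (inner ℝ p u : ℝ)) '' K) :=
  (hK.image (Continuous.inner continuous_id continuous_const)).bddAbove

lemma bddBelow_img {K : Set Plane} (hK : IsCompact K) (u : Plane) :
    BddBelow ((fun p => (inner ℝ p u : ℝ)) '' K) :=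
  (hK.image (Continuous.inner continuous_id continuous_const)).bddBelow

lemma le_sfun {K : Set Plane} (hK : IsCompact K) {p : Plane} (hp : p ∈ K) (u : Plane) :
    ⟪p, u⟫ ≤ sfun K u :=
  le_csSup (bddAbove_img hK u) ⟨p, hp, rfl⟩

lemma sfun_le {K : Set Plane} (hne : K.Nonempty) {u : Plane} {a : ℝ}
    (h : ∀ p ∈ K, ⟪p, u⟫ ≤ a) : sfun K u ≤ a := by
  refine csSup_le (hne.image _) ?_
  rintro y ⟨p, hp, rfl⟩
  exact h p hp

/-- If the affine support inequalities hold, the closed ball is inside `K`. -/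
lemma ball_subset_of_support {K : Set Plane} (hK : IsCompact K) (hconv : Convex ℝ K)
    (hne : K.Nonempty) (c : Plane) (r : ℝ)
    (hs : ∀ u : Plane, ‖u‖ = 1 → ⟪c, u⟫ + r ≤ sfun K u) :
    Metric.closedBall c r ⊆ K := by
  intro x hx
  by_contra hxK
  obtain ⟨f, t, hft, htx⟩ := geometric_hahn_banach_closed_point hconv hK.isClosed hxK
  obtain ⟨v, hv⟩ := (InnerProductSpace.toDual ℝ Plane).surjective f
  have hfy : ∀ y : Plane, f y = ⟪v, y⟫ := by
    intro y; rw [← hv]; exact InnerProductSpace.toDual_apply_apply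
  have hvne : v ≠ 0 := by
    rintro rfl
    obtain ⟨p, hp⟩ := hne
    have h1 := hft p hp
    rw [hfy] at h1 htx
    simp only [inner_zero_left] at h1 htx
    linarith
  have hnv : (0:ℝ) < ‖v‖ := norm_pos_iff.2 hvne
  set u : Plane := ‖v‖⁻¹ • v with hu
  have hun : ‖u‖ = 1 := by
    rw [hu, norm_smul, norm_inv, norm_norm, inv_mul_cancel₀ hnv.ne']
  have hsup : sfun K u ≤ ‖v‖⁻¹ * t := by
    refine sfun_le hne ?_
    intro p hp
    have : ⟪p, u⟫ = ‖v‖⁻¹ * ⟪v, p⟫ := by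
      rw [hu, real_inner_smul_right, real_inner_comm]
    rw [this]
    have := (hft p hp)
    rw [hfy] at this
    exact mul_le_mul_of_nonneg_left this.le (inv_nonneg.2 hnv.le)
  have h2 : ‖v‖⁻¹ * t < ⟪x, u⟫ := by
    have : ⟪x, u⟫ = ‖v‖⁻¹ * ⟪v, x⟫ := by
      rw [hu, real_inner_smul_right, real_inner_comm]
    rw [this]
    have := htx
    rw [hfy] at this
    exact mul_lt_mul_of_pos_left this (inv_pos.2 hnv)
  have h3 : ⟪x - c, u⟫ ≤ r := by
    calc ⟪x - c, u⟫ ≤ ‖x - c‖ * ‖u‖ := real_inner_le_norm _ _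
      _ ≤ r := by rw [hun, mul_one]; exact mem_closedBall_iff_norm.mp hx
  have h4 : ⟪x - c, u⟫ = ⟪x, u⟫ - ⟪c, u⟫ := inner_sub_left _ _ _
  have h1 : ⟪c, u⟫ + r ≤ ‖v‖⁻¹ * t := (hs u hun).trans hsup
  linarith

end WidthToInnerBall

open WidthToInnerBall Filter

set_option maxHeartbeats 2000000 in
theorem width_to_inner_ball (K : Set Plane) (hK : IsCompact K) (hconv : Convex ℝ K)
    (hint : (interior K).Nonempty) :
    ∃ c : Plane, Metric.closedBall c (width K / (2 * Real.sqrt 3)) ⊆ K := by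
  classical
  have hne : K.Nonempty := hint.mono interior_subset
  -- bound M on K
  obtain ⟨M, hMK⟩ := hK.isBounded.subset_closedBall 0
  have hM : ∀ p ∈ K, ‖p‖ ≤ M := fun p hp => mem_closedBall_zero_iff.mp (hMK hp)
  have hM0 : 0 ≤ M := le_trans (norm_nonneg _) (hM _ hne.some_mem)
  -- the set of inscribed radii
  set Rs : Set ℝ := {r : ℝ | 0 ≤ r ∧ ∃ c : Plane, Metric.closedBall c r ⊆ K} with hRs
  have hRsne : Rs.Nonempty := by
    refine ⟨0, le_refl _, hne.some, ?_⟩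
    rw [Metric.closedBall_zero]
    simpa using hne.some_mem
  have hRsbdd : BddAbove Rs := by
    refine ⟨2 * M, ?_⟩
    rintro ρ ⟨hρ0, c', hc'⟩
    set e : Plane := EuclideanSpace.single (0 : Fin 2) (1:ℝ) with he
    have hene : ‖e‖ = 1 := by rw [he, EuclideanSpace.norm_single, norm_one]
    have h1 : c' + ρ • e ∈ K := by
      refine hc' ?_
      rw [Metric.mem_closedBall, dist_eq_norm]
      simp [norm_smul, hene, abs_of_nonneg hρ0]
    have h2 : c' ∈ K := hc' (Metric.mem_closedBall_self hρ0)
    have : ρ = ‖(c' + ρ • e) - c'‖ := by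
      simp [norm_smul, hene, abs_of_nonneg hρ0]
    rw [this]
    calc ‖(c' + ρ • e) - c'‖ ≤ ‖c' + ρ • e‖ + ‖c'‖ := norm_sub_le _ _
      _ ≤ M + M := add_le_add (hM _ h1) (hM _ h2)
      _ = 2 * M := by ring
  set R : ℝ := sSup Rs with hRdef
  have hRpos : 0 < R := by
    obtain ⟨x, hx⟩ := hint
    obtain ⟨ε, hε, hball⟩ := Metric.isOpen_iff.mp isOpen_interior x hx
    have : ε / 2 ∈ Rs := by
      refine ⟨by positivity, x, ?_⟩
      exact (Metric.closedBall_subset_ball (by linarith)).trans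
        (hball.trans interior_subset)
    have := le_csSup hRsbdd this
    linarith [this, half_pos hε]
  have hRmem : ∀ r ∈ Rs, r ≤ R := fun r hr => le_csSup hRsbdd hr
  -- attainment of the maximal inscribed ball
  have hseq : ∀ n : ℕ, ∃ r ∈ Rs, R - 1 / (n + 1) < r := by
    intro n
    refine exists_lt_of_lt_csSup hRsne ?_
    have : (0:ℝ) < 1 / (n+1) := by positivity
    linarith
  choose r hrRs hrlt using hseq
  have hr0 : ∀ n, 0 ≤ r n := fun n => (hrRs n).1
  choose cs hcs using fun n => (hrRs n).2
  have hcsK : ∀ n, cs n ∈ K := fun n => hcs n (Metric.mem_closedBall_self (hr0 n))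
  obtain ⟨c, hcK, φ, hφmono, hφtend⟩ := hK.tendsto_subseq hcsK
  have hrle : ∀ n, r n ≤ R := fun n => hRmem _ (hrRs n)
  have htend0 : Tendsto (fun n : ℕ => (1:ℝ) / (φ n + 1)) atTop (𝓝 0) :=
    tendsto_one_div_add_atTop_nhds_zero_nat.comp hφmono.tendsto_atTop
  have hrtend : Tendsto (fun n => r (φ n)) atTop (𝓝 R) := by
    have hlow : Tendsto (fun n : ℕ => R - 1 / (φ n + 1)) atTop (𝓝 R) := by
      have h := Tendsto.sub (tendsto_const_nhds : Tendsto (fun _ : ℕ => R) atTop (𝓝 R)) htend0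
      simpa using h
    refine tendsto_of_tendsto_of_tendsto_of_le_of_le hlow tendsto_const_nhds
      (fun n => (hrlt (φ n)).le) (fun n => hrle (φ n))
  have hball : Metric.closedBall c R ⊆ K := by
    intro x hx
    have hxc : ‖x - c‖ ≤ R := mem_closedBall_iff_norm.mp hx
    set y : ℕ → Plane := fun n => cs (φ n) + (r (φ n) / R) • (x - c) with hy
    have hyK : ∀ n, y n ∈ K := by
      intro n
      refine hcs (φ n) ?_
      have hyn : y n - cs (φ n) = (r (φ n) / R) • (x - c) := by
        rw [hy]; exact add_sub_cancel_left _ _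
      rw [Metric.mem_closedBall, dist_eq_norm, hyn, norm_smul, Real.norm_eq_abs,
        abs_of_nonneg (div_nonneg (hr0 _) hRpos.le)]
      calc r (φ n) / R * ‖x - c‖ ≤ r (φ n) / R * R := by
            refine mul_le_mul_of_nonneg_left hxc (div_nonneg (hr0 _) hRpos.le)
        _ = r (φ n) := by field_simp
    have hytend : Tendsto y atTop (𝓝 x) := by
      have h1 : Tendsto (fun n => r (φ n) / R) atTop (𝓝 1) := by
        have := hrtend.div_const R
        rwa [div_self hRpos.ne'] at this
      have h2 : Tendsto (fun n => (r (φ n) / R) • (x - c)) atTop (𝓝 ((1:ℝ) • (x - c))) :=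
        h1.smul_const _
      have := hφtend.add h2
      rw [one_smul] at this
      convert this using 2
      · rfl
      · abel
    exact hK.isClosed.mem_of_tendsto hytend (Eventually.of_forall hyK)
  -- support inequalities of the maximal ball
  have hsupp : ∀ u : Plane, ‖u‖ = 1 → ⟪c, u⟫ + R ≤ sfun K u := by
    intro u hu
    have hmem : c + R • u ∈ K := by
      refine hball ?_
      rw [Metric.mem_closedBall, dist_eq_norm]
      simp [norm_smul, hu, abs_of_nonneg hRpos.le]
    have := le_sfun hK hmem u
    rwa [inner_add_left, real_inner_smul_left, real_inner_self_eq_norm_sq, hu,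
      one_pow, mul_one] at this
  -- the contact normal set
  set S : Set Plane := {u : Plane | ‖u‖ = 1 ∧ sfun K u ≤ ⟪c, u⟫ + R} with hS
  -- 0 is in the closure of the convex hull of S
  have h0cl : (0 : Plane) ∈ closure (convexHull ℝ S) := by
    by_contra h0
    obtain ⟨f, s, hfS, hs0⟩ := geometric_hahn_banach_closed_point
      ((convex_convexHull ℝ S).closure) isClosed_closure h0
    obtain ⟨v, hv⟩ := (InnerProductSpace.toDual ℝ Plane).surjective f
    have hfy : ∀ y : Plane, f y = ⟪v, y⟫ := by
      intro y; rw [← hv]; exact InnerProductSpace.toDual_apply_apply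
    have hs_neg : s < 0 := by
      have := hs0; rw [hfy, inner_zero_right] at this; linarith
    have hvS : ∀ u ∈ S, ⟪v, u⟫ < s := by
      intro u hu
      have := hfS u (subset_closure (subset_convexHull ℝ S hu))
      rwa [hfy] at this
    -- find a direction to enlarge the ball
    have hkey : ∃ n : ℕ, ∀ u : Plane, ‖u‖ = 1 →
        ⟪c + (1 / (n+1 : ℝ)) • v, u⟫ + (R + (1 / (n+1 : ℝ))^2) ≤ sfun K u := by
      by_contra hno
      push_neg at hno
      choose U hU1 hU2 using hno
      obtain ⟨u, humem, ψ, hψmono, hψtend⟩ := (isCompact_sphere (0:Plane) 1).tendsto_subseq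
        (fun n => mem_sphere_zero_iff_norm.2 (hU1 n))
      have hunorm : ‖u‖ = 1 := mem_sphere_zero_iff_norm.mp humem
      set t : ℕ → ℝ := fun n => (1 : ℝ) / (ψ n + 1) with ht
      have htpos : ∀ n, 0 < t n := fun n => by positivity
      have httend : Tendsto t atTop (𝓝 0) :=
        tendsto_one_div_add_atTop_nhds_zero_nat.comp hψmono.tendsto_atTop
      have hUtend : Tendsto (fun n => U (ψ n)) atTop (𝓝 u) := hψtend
      have hexp : ∀ n, sfun K (U (ψ n)) <
          ⟪c, U (ψ n)⟫ + t n * ⟪v, U (ψ n)⟫ + R + (t n)^2 := by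
        intro n
        have := hU2 (ψ n)
        rw [inner_add_left, real_inner_smul_left] at this
        linarith
      have hvUtend : Tendsto (fun n => ⟪v, U (ψ n)⟫) atTop (𝓝 ⟪v, u⟫) := by
        exact ((Continuous.inner continuous_const continuous_id).tendsto u).comp hUtend
      -- limit of RHS
      have hRHS : Tendsto (fun n => ⟪c, U (ψ n)⟫ + t n * ⟪v, U (ψ n)⟫ + R + (t n)^2)
          atTop (𝓝 (⟪c, u⟫ + R)) := by
        have h1 : Tendsto (fun n => ⟪c, U (ψ n)⟫) atTop (𝓝 ⟪c, u⟫) :=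
          ((Continuous.inner continuous_const continuous_id).tendsto u).comp hUtend
        have h2 : Tendsto (fun n => t n * ⟪v, U (ψ n)⟫) atTop (𝓝 (0 * ⟪v, u⟫)) :=
          httend.mul hvUtend
        have h3 : Tendsto (fun n => (t n)^2) atTop (𝓝 (0^2)) := httend.pow 2
        have := ((h1.add h2).add (tendsto_const_nhds : Tendsto (fun _ : ℕ => R) atTop (𝓝 R))).add h3
        simpa using this
      -- u ∈ S
      have huS : u ∈ S := by
        refine ⟨hunorm, ?_⟩
        refine sfun_le hne ?_
        intro p hp
        have hle : ∀ n, ⟪p, U (ψ n)⟫ ≤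
            ⟪c, U (ψ n)⟫ + t n * ⟪v, U (ψ n)⟫ + R + (t n)^2 :=
          fun n => (le_sfun hK hp _).trans (hexp n).le
        have hLHS : Tendsto (fun n => ⟪p, U (ψ n)⟫) atTop (𝓝 ⟪p, u⟫) :=
          ((Continuous.inner continuous_const continuous_id).tendsto u).comp hUtend
        exact le_of_tendsto_of_tendsto' hLHS hRHS hle
      have hneg : ⟪v, u⟫ < s := hvS u huS
      -- but also ⟪v,u⟫ ≥ 0
      have hpos : 0 ≤ ⟪v, u⟫ := by
        have hlow : ∀ n, -(t n) ≤ ⟪v, U (ψ n)⟫ := by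
          intro n
          have h1 := hsupp (U (ψ n)) (hU1 (ψ n))
          have h2 := hexp n
          have h3 := htpos n
          nlinarith [sq_nonneg (t n)]
        have hmt : Tendsto (fun n => -(t n)) atTop (𝓝 (-0)) := httend.neg
        rw [neg_zero] at hmt
        exact le_of_tendsto_of_tendsto' hmt hvUtend hlow
      linarith
    obtain ⟨n, hn⟩ := hkey
    have hbig : R + (1 / (n+1 : ℝ))^2 ∈ Rs := by
      refine ⟨by positivity, c + (1 / (n+1 : ℝ)) • v, ?_⟩
      exact ball_subset_of_support hK hconv hne _ _ hn
    have := hRmem _ hbig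
    have : (0:ℝ) < (1 / (n+1 : ℝ))^2 := by positivity
    linarith [hRmem _ hbig]
  -- width K ≤ 3 R
  have hwidth : width K ≤ 3 * R := by
    refine le_of_forall_pos_le_add ?_
    intro ε hε
    set B : ℝ := 3 * (M + ‖c‖) + 1 with hB
    have hBpos : 0 < B := by positivity
    obtain ⟨x, hxconv, hxd⟩ := Metric.mem_closure_iff.mp h0cl (ε / B) (by positivity)
    have hxnorm : ‖x‖ ≤ ε / B := by
      rw [dist_zero_left] at hxd  -- wrong direction? dist 0 x
      exact hxd.le
    rw [convexHull_eq_union] at hxconv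
    simp only [Set.mem_iUnion] at hxconv
    obtain ⟨T, hTS, hTai, hxT⟩ := hxconv
    have hTcard : (T.card : ℝ) ≤ 3 := by
      have h1 := hTai.card_le_finrank_succ
      rw [Fintype.card_coe] at h1
      have h2 : Module.finrank ℝ ↥(vectorSpan ℝ (Set.range (Subtype.val : T → Plane)))
          ≤ Module.finrank ℝ Plane := Submodule.finrank_le _
      rw [finrank_euclideanSpace_fin] at h2
      exact_mod_cast h1.trans (by omega)
    rw [Finset.convexHull_eq] at hxT
    obtain ⟨w, hw0, hw1, hwx⟩ := hxT
    rw [Finset.centerMass_eq_of_sum_1 _ _ hw1] at hwx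
    simp only [id_eq] at hwx
    have hTne : T.Nonempty := by
      rcases Finset.eq_empty_or_nonempty T with h | h
      · exfalso; rw [h] at hw1; simp at hw1
      · exact h
    obtain ⟨u₀, hu₀T, hw₀⟩ : ∃ y ∈ T, 1/3 ≤ w y := by
      by_contra hcon
      push_neg at hcon
      have hlt := Finset.sum_lt_sum_of_nonempty hTne hcon
      rw [hw1, Finset.sum_const, nsmul_eq_mul] at hlt
      have : (T.card : ℝ) * (1/3) ≤ 1 := by linarith
      linarith
    have hw₀pos : 0 < w u₀ := lt_of_lt_of_le (by norm_num) hw₀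
    have hu₀S : u₀ ∈ S := hTS hu₀T
    obtain ⟨hu₀norm, hu₀sup⟩ := hu₀S
    -- the erase sum facts
    have hsplit : w u₀ • u₀ + ∑ y ∈ T.erase u₀, w y • y = x := by
      rw [← hwx]; exact Finset.add_sum_erase T (fun y => w y • y) hu₀T
    have hsum1 : w u₀ + ∑ y ∈ T.erase u₀, w y = 1 := by
      rw [← hw1]; exact Finset.add_sum_erase T w hu₀T
    have herase_nonneg : 0 ≤ ∑ y ∈ T.erase u₀, w y :=
      Finset.sum_nonneg fun y hy => hw0 y (Finset.mem_of_mem_erase hy)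
    -- lower bound
    have hlower : ∀ p ∈ K, ⟪c, u₀⟫ - 2*R - ε ≤ ⟪p, u₀⟫ := by
      intro p hp
      have e1 : w u₀ * ⟪p, u₀⟫ + ∑ y ∈ T.erase u₀, w y * ⟪p, y⟫ = ⟪p, x⟫ := by
        rw [← hsplit, inner_add_right, real_inner_smul_right, inner_sum]
        congr 1
        exact Finset.sum_congr rfl fun y _ => (real_inner_smul_right _ _ _).symm
      have e2 : w u₀ * ⟪c, u₀⟫ + ∑ y ∈ T.erase u₀, w y * ⟪c, y⟫ = ⟪c, x⟫ := by
        rw [← hsplit, inner_add_right, real_inner_smul_right, inner_sum]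
        congr 1
        exact Finset.sum_congr rfl fun y _ => (real_inner_smul_right _ _ _).symm
      have hterm : ∀ y ∈ T.erase u₀, w y * ⟪p, y⟫ ≤ w y * (⟪c, y⟫ + R) := by
        intro y hy
        have hyS : y ∈ S := hTS (Finset.mem_of_mem_erase hy)
        have h1 : ⟪p, y⟫ ≤ ⟪c, y⟫ + R := (le_sfun hK hp y).trans hyS.2
        exact mul_le_mul_of_nonneg_left h1 (hw0 y (Finset.mem_of_mem_erase hy))
      have hsumle : ∑ y ∈ T.erase u₀, w y * ⟪p, y⟫ ≤
          (∑ y ∈ T.erase u₀, w y * ⟪c, y⟫) + (∑ y ∈ T.erase u₀, w y) * R := by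
        calc ∑ y ∈ T.erase u₀, w y * ⟪p, y⟫ ≤ ∑ y ∈ T.erase u₀, w y * (⟪c, y⟫ + R) :=
              Finset.sum_le_sum hterm
          _ = (∑ y ∈ T.erase u₀, w y * ⟪c, y⟫) + (∑ y ∈ T.erase u₀, w y) * R := by
              simp only [mul_add]
              rw [Finset.sum_add_distrib, ← Finset.sum_mul]
      have hpcx : |⟪p - c, x⟫| ≤ (M + ‖c‖) * (ε / B) := by
        calc |⟪p - c, x⟫| ≤ ‖p - c‖ * ‖x‖ := abs_real_inner_le_norm _ _
          _ ≤ (M + ‖c‖) * (ε / B) := by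
              refine mul_le_mul ?_ hxnorm (norm_nonneg _) (by positivity)
              calc ‖p - c‖ ≤ ‖p‖ + ‖c‖ := norm_sub_le _ _
                _ ≤ M + ‖c‖ := by linarith [hM p hp]
      have hsub : ⟪p - c, x⟫ = ⟪p, x⟫ - ⟪c, x⟫ := inner_sub_left _ _ _
      have hA4 : (M + ‖c‖) * (ε / B) ≤ ε / 3 := by
        have hq : (M + ‖c‖) * (ε / B) = ((M + ‖c‖) * ε) / B := by ring
        rw [hq, div_le_div_iff₀ hBpos (by norm_num : (0:ℝ) < 3)]
        nlinarith [hε.le, norm_nonneg c, hM0, hB]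
      -- combine
      have hA1 : w u₀ * ⟪p, u₀⟫ ≥ ⟪p - c, x⟫ + w u₀ * ⟪c, u₀⟫ - (1 - w u₀) * R := by
        have h5 : ∑ y ∈ T.erase u₀, w y = 1 - w u₀ := by linarith
        rw [hsub]
        have := hsumle
        rw [h5] at this
        linarith [e1, e2]
      have hA2 : -((M + ‖c‖) * (ε / B)) ≤ ⟪p - c, x⟫ := neg_le_of_abs_le hpcx
      have hA3 : 1 - w u₀ ≤ 2 * w u₀ := by linarith
      have hw₀eps : ε / 3 ≤ w u₀ * ε := by
        calc ε / 3 = (1/3) * ε := by ring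
          _ ≤ w u₀ * ε := mul_le_mul_of_nonneg_right hw₀ hε.le
      have key : 0 ≤ w u₀ * (⟪p, u₀⟫ - (⟪c, u₀⟫ - 2*R - ε)) := by
        have h6 : (1 - w u₀) * R ≤ 2 * w u₀ * R :=
          mul_le_mul_of_nonneg_right hA3 hRpos.le
        nlinarith [hA1, hA2, hA4, hw₀eps, h6]
      have := (mul_nonneg_iff_of_pos_left hw₀pos).mp key
      linarith
    have hupper : ∀ p ∈ K, ⟪p, u₀⟫ ≤ ⟪c, u₀⟫ + R :=
      fun p hp => (le_sfun hK hp u₀).trans hu₀sup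
    -- width bound
    have hmemw : (sSup ((fun p => (inner ℝ p u₀ : ℝ)) '' K) -
        sInf ((fun p => (inner ℝ p u₀ : ℝ)) '' K)) ∈
        {w : ℝ | ∃ u : Plane, ‖u‖ = 1 ∧
          w = sSup ((fun p => (inner ℝ p u : ℝ)) '' K) - sInf ((fun p => (inner ℝ p u : ℝ)) '' K)} :=
      ⟨u₀, hu₀norm, rfl⟩
    have hbddw : BddBelow {w : ℝ | ∃ u : Plane, ‖u‖ = 1 ∧
        w = sSup ((fun p => (inner ℝ p u : ℝ)) '' K) - sInf ((fun p => (inner ℝ p u : ℝ)) '' K)} := by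
      refine ⟨0, ?_⟩
      rintro y ⟨u, hu, rfl⟩
      have := csInf_le_csSup (hne.image _) (bddBelow_img hK u) (bddAbove_img hK u)
      linarith
    have h1 : width K ≤ sSup ((fun p => (inner ℝ p u₀ : ℝ)) '' K) -
        sInf ((fun p => (inner ℝ p u₀ : ℝ)) '' K) := csInf_le hbddw hmemw
    have h2 : sSup ((fun p => (inner ℝ p u₀ : ℝ)) '' K) ≤ ⟪c, u₀⟫ + R :=
      sfun_le hne hupper
    have h3 : ⟪c, u₀⟫ - 2*R - ε ≤ sInf ((fun p => (inner ℝ p u₀ : ℝ)) '' K) := by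
      refine le_csInf (hne.image _) ?_
      rintro y ⟨p, hp, rfl⟩
      exact hlower p hp
    linarith
  -- conclusion
  refine ⟨c, ?_⟩
  refine (Metric.closedBall_subset_closedBall ?_).trans hball
  have hsqrt3 : (1.7 : ℝ) < Real.sqrt 3 := by
    have : (1.7 : ℝ) = Real.sqrt (1.7^2) := by
      rw [Real.sqrt_sq]; norm_num
    rw [this]
    apply Real.sqrt_lt_sqrt <;> norm_num
  have h2s3 : (0:ℝ) < 2 * Real.sqrt 3 := by linarith
  rw [div_le_iff₀ h2s3]
  calc width K ≤ 3 * R := hwidth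
    _ ≤ R * (2 * Real.sqrt 3) := by nlinarith [hRpos.le]
end
end

section
/- Let P be a compact convex subset of ℝ² with nonempty interior, of width w, and let m be a positive integer. Then there exists a finite set S ⊆ P with at most 2m + 5 points such that, setting P' = convexHull(S), one has P' ⊆ P and every point p ∈ P is at (Euclidean) distance at most w/m from P'. -/
open MeasureTheory Pointwise

noncomputable section

section Aux

lemma seg_coord {E : Type*} [AddCommGroup E] [Module ℝ E]
    (x y : E → ℝ)
    (hx : ∀ (a b : ℝ) (p q : E), a + b = 1 → x (a • p + b • q) = a * x p + b * x q)
    (hy : ∀ (a b : ℝ) (p q : E), a + b = 1 → y (a • p + b • q) = a * y p + b * y q)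
    (s₁ s₂ : E) (ξ : ℝ) (h₁ : min (x s₁) (x s₂) ≤ ξ) (h₂ : ξ ≤ max (x s₁) (x s₂)) :
    ∃ q ∈ segment ℝ s₁ s₂, x q = ξ ∧ min (y s₁) (y s₂) ≤ y q ∧ y q ≤ max (y s₁) (y s₂) := by
  have main : ∀ s₁ s₂ : E, x s₁ ≤ x s₂ → min (x s₁) (x s₂) ≤ ξ → ξ ≤ max (x s₁) (x s₂) →
      ∃ q ∈ segment ℝ s₁ s₂, x q = ξ ∧ min (y s₁) (y s₂) ≤ y q ∧ y q ≤ max (y s₁) (y s₂) := by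
    intro s₁ s₂ hle hmin hmax
    rw [min_eq_left hle] at hmin
    rw [max_eq_right hle] at hmax
    rcases eq_or_lt_of_le hle with heq | hlt
    · refine ⟨s₁, left_mem_segment ℝ s₁ s₂, le_antisymm hmin (by rw [heq]; exact hmax), ?_, ?_⟩
      · exact min_le_left _ _
      · exact le_max_left _ _
    · set θ := (ξ - x s₁) / (x s₂ - x s₁) with hθ
      have hd : 0 < x s₂ - x s₁ := by linarith
      have hθ0 : 0 ≤ θ := div_nonneg (by linarith) hd.le
      have hθ1 : θ ≤ 1 := by rw [div_le_one hd]; linarith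
      refine ⟨(1 - θ) • s₁ + θ • s₂, ⟨1 - θ, θ, by linarith, hθ0, by ring, rfl⟩, ?_, ?_, ?_⟩
      · rw [hx (1 - θ) θ s₁ s₂ (by ring)]
        have hθm : θ * (x s₂ - x s₁) = ξ - x s₁ := div_mul_cancel₀ _ hd.ne'
        linear_combination hθm
      · rw [hy (1 - θ) θ s₁ s₂ (by ring)]
        have h1 := min_le_left (y s₁) (y s₂)
        have h2 := min_le_right (y s₁) (y s₂)
        nlinarith
      · rw [hy (1 - θ) θ s₁ s₂ (by ring)]
        have h1 := le_max_left (y s₁) (y s₂)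
        have h2 := le_max_right (y s₁) (y s₂)
        nlinarith
  rcases le_total (x s₁) (x s₂) with h | h
  · exact main s₁ s₂ h h₁ h₂
  · obtain ⟨q, hq, h3, h4, h5⟩ := main s₂ s₁ h (by rwa [min_comm]) (by rwa [max_comm])
    exact ⟨q, segment_symm ℝ s₂ s₁ ▸ hq, h3, by rwa [min_comm], by rwa [max_comm]⟩

lemma inner_cont (u : Plane) : Continuous (fun p : Plane => (inner ℝ p u : ℝ)) :=
  continuous_id.inner continuous_const

lemma width_attained (P : Set Plane) (hP : IsCompact P) (hne : P.Nonempty) :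
    ∃ u : Plane, ‖u‖ = 1 ∧
      width P = sSup ((fun p => (inner ℝ p u : ℝ)) '' P) - sInf ((fun p => (inner ℝ p u : ℝ)) '' P) := by
  obtain ⟨R, hR⟩ := hP.isBounded.exists_norm_le
  have hR0 : 0 ≤ R := le_trans (norm_nonneg _) (hR _ hne.some_mem)
  set E : Plane → ℝ := fun u =>
    sSup ((fun p => (inner ℝ p u : ℝ)) '' P) - sInf ((fun p => (inner ℝ p u : ℝ)) '' P) with hE
  have hbddA : ∀ u : Plane, BddAbove ((fun p => (inner ℝ p u : ℝ)) '' P) := fun u =>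
    (hP.image (inner_cont u)).bddAbove
  have hbddB : ∀ u : Plane, BddBelow ((fun p => (inner ℝ p u : ℝ)) '' P) := fun u =>
    (hP.image (inner_cont u)).bddBelow
  have hneI : ∀ u : Plane, ((fun p => (inner ℝ p u : ℝ)) '' P).Nonempty := fun u => hne.image _
  have key : ∀ u v : Plane, ∀ p ∈ P, (inner ℝ p u : ℝ) ≤ inner ℝ p v + R * ‖u - v‖ := by
    intro u v p hp
    have h1 : (inner ℝ p u : ℝ) - inner ℝ p v = inner ℝ p (u - v) := by rw [inner_sub_right]
    have h2 : (inner ℝ p (u - v) : ℝ) ≤ ‖p‖ * ‖u - v‖ := real_inner_le_norm _ _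
    have h3 : ‖p‖ * ‖u - v‖ ≤ R * ‖u - v‖ :=
      mul_le_mul_of_nonneg_right (hR p hp) (norm_nonneg _)
    linarith
  have hSup : ∀ u v : Plane, sSup ((fun p => (inner ℝ p u : ℝ)) '' P)
      ≤ sSup ((fun p => (inner ℝ p v : ℝ)) '' P) + R * ‖u - v‖ := by
    intro u v
    refine csSup_le (hneI u) ?_
    rintro w ⟨p, hp, rfl⟩
    have := le_csSup (hbddA v) ⟨p, hp, rfl⟩
    have := key u v p hp
    linarith
  have hInf : ∀ u v : Plane, sInf ((fun p => (inner ℝ p v : ℝ)) '' P)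
      ≤ sInf ((fun p => (inner ℝ p u : ℝ)) '' P) + R * ‖u - v‖ := by
    intro u v
    rw [← sub_le_iff_le_add]
    refine le_csInf (hneI u) ?_
    rintro w ⟨p, hp, rfl⟩
    have h4 := csInf_le (hbddB v) ⟨p, hp, rfl⟩
    have h5 : (inner ℝ p v : ℝ) ≤ inner ℝ p u + R * ‖u - v‖ := by
      have hsym : ‖v - u‖ = ‖u - v‖ := norm_sub_rev v u
      have := key v u p hp
      rw [hsym] at this; linarith
    linarith
  have hEcont : Continuous E := by
    rw [Metric.continuous_iff]
    intro u ε hε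
    by_cases hR' : R = 0
    · exact ⟨1, one_pos, fun v _ => by
        have h1 := hSup u v; have h2 := hSup v u; have h3 := hInf u v; have h4 := hInf v u
        rw [hR'] at h1 h2 h3 h4
        have : E v = E u := by simp only [hE]; rw [norm_sub_rev] at h2 h4; linarith
        simpa [this] using hε⟩
    have hRpos : 0 < R := lt_of_le_of_ne hR0 (Ne.symm hR')
    refine ⟨ε / (2 * R), by positivity, fun v hv => ?_⟩
    have hd : ‖v - u‖ < ε / (2 * R) := by rwa [dist_eq_norm] at hv
    have h1 := hSup u v; have h2 := hSup v u; have h3 := hInf u v; have h4 := hInf v u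
    rw [norm_sub_rev] at h2 h4
    have hnn : R * ‖v - u‖ < ε / 2 := by
      have := mul_lt_mul_of_pos_left hd hRpos
      calc R * ‖v - u‖ < R * (ε / (2*R)) := this
        _ = ε / 2 := by field_simp
    rw [Real.dist_eq]
    have hvu : R * ‖u - v‖ = R * ‖v - u‖ := by rw [norm_sub_rev]
    have : |E v - E u| ≤ 2 * (R * ‖v - u‖) := by
      rw [abs_sub_le_iff]
      constructor <;> simp only [hE] <;> linarith
    linarith
  have hsne : (Metric.sphere (0:Plane) 1).Nonempty := NormedSpace.sphere_nonempty.2 zero_le_one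
  obtain ⟨u₀, hu₀s, hmin⟩ := (isCompact_sphere (0:Plane) 1).exists_isMinOn hsne hEcont.continuousOn
  have hu₀ : ‖u₀‖ = 1 := by simpa using hu₀s
  refine ⟨u₀, hu₀, ?_⟩
  have hbdd0 : (0:ℝ) ∈ lowerBounds {w : ℝ | ∃ u : Plane, ‖u‖ = 1 ∧
      w = sSup ((fun p => (inner ℝ p u : ℝ)) '' P) - sInf ((fun p => (inner ℝ p u : ℝ)) '' P)} := by
    rintro w ⟨u, hu, rfl⟩
    exact sub_nonneg.2 (csInf_le_csSup (hneI u) (hbddB u) (hbddA u))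
  apply le_antisymm
  · exact csInf_le ⟨0, hbdd0⟩ ⟨u₀, hu₀, rfl⟩
  · refine le_csInf ⟨E u₀, u₀, hu₀, rfl⟩ ?_
    rintro w ⟨u, hu, rfl⟩
    exact hmin (by simpa using hu)

end Aux

set_option maxHeartbeats 1000000 in
theorem approx_polygon (P : Set Plane) (hP : IsCompact P) (hconv : Convex ℝ P)
    (hint : (interior P).Nonempty) (m : ℕ) (hm : 0 < m) :
    ∃ S : Finset Plane, ↑S ⊆ P ∧ S.card ≤ 2 * m + 5 ∧
      convexHull ℝ (S : Set Plane) ⊆ P ∧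
      ∀ p ∈ P, Metric.infDist p (convexHull ℝ (S : Set Plane)) ≤ width P / m := by
  classical
  obtain ⟨z, hz⟩ := hint
  have hne : P.Nonempty := ⟨z, interior_subset hz⟩
  obtain ⟨u, hu, hwidth⟩ := width_attained P hP hne
  set y : Plane → ℝ := fun p => (inner ℝ p u : ℝ) with hydef
  set v : Plane := (show Plane from WithLp.toLp 2 ![-u 1, u 0]) with hvdef
  set x : Plane → ℝ := fun p => (inner ℝ p v : ℝ) with hxdef
  have hv0 : v 0 = -u 1 := rfl
  have hv1 : v 1 = u 0 := rfl
  have huv : u 0 ^ 2 + u 1 ^ 2 = 1 := by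
    have h2 : ‖u‖ ^ 2 = 1 := by rw [hu]; norm_num
    rw [EuclideanSpace.norm_eq, Real.sq_sqrt (by positivity), Fin.sum_univ_two] at h2
    simpa [Real.norm_eq_abs, sq_abs] using h2
  have hxcoord : ∀ p : Plane, x p = p 0 * (-u 1) + p 1 * u 0 := by
    intro p
    simp [hxdef, PiLp.inner_apply, Fin.sum_univ_two, RCLike.inner_apply, hv0, hv1]
    ring
  have hycoord : ∀ p : Plane, y p = p 0 * u 0 + p 1 * u 1 := by
    intro p
    simp [hydef, PiLp.inner_apply, Fin.sum_univ_two, RCLike.inner_apply]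
    ring
  have hycont : Continuous y := inner_cont u
  have hxcont : Continuous x := inner_cont v
  -- linearity of coordinates
  have hxaff : ∀ (a b : ℝ) (p q : Plane), a + b = 1 → x (a • p + b • q) = a * x p + b * x q := by
    intro a b p q _
    simp [hxdef, inner_add_left, real_inner_smul_left]
  have hyaff : ∀ (a b : ℝ) (p q : Plane), a + b = 1 → y (a • p + b • q) = a * y p + b * y q := by
    intro a b p q _
    simp [hydef, inner_add_left, real_inner_smul_left]
  -- distance along vertical lines
  have hdist : ∀ p q : Plane, x p = x q → dist p q = |y p - y q| := by
    intro p q hxq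
    have hn : ‖p - q‖ ^ 2 = (p 0 - q 0) ^ 2 + (p 1 - q 1) ^ 2 := by
      rw [EuclideanSpace.norm_eq, Real.sq_sqrt (by positivity), Fin.sum_univ_two]
      simp [Real.norm_eq_abs, sq_abs]
    have hxy : (x p - x q) ^ 2 + (y p - y q) ^ 2 = (p 0 - q 0) ^ 2 + (p 1 - q 1) ^ 2 := by
      rw [hxcoord p, hxcoord q, hycoord p, hycoord q]
      linear_combination ((p 0 - q 0) ^ 2 + (p 1 - q 1) ^ 2) * huv
    have hsq : ‖p - q‖ ^ 2 = (y p - y q) ^ 2 := by rw [hn, ← hxy, hxq]; ring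
    rw [dist_eq_norm, ← Real.sqrt_sq_eq_abs, ← hsq, Real.sqrt_sq (norm_nonneg _)]
  -- extremes in the y direction
  set c : ℝ := sInf (y '' P) with hcdef
  set d : ℝ := sSup (y '' P) with hddef
  have hbddA : BddAbove (y '' P) := (hP.image hycont).bddAbove
  have hbddB : BddBelow (y '' P) := (hP.image hycont).bddBelow
  have hcle : ∀ p ∈ P, c ≤ y p := fun p hp => csInf_le hbddB ⟨p, hp, rfl⟩
  have hdge : ∀ p ∈ P, y p ≤ d := fun p hp => le_csSup hbddA ⟨p, hp, rfl⟩
  -- positive width in direction u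
  have hdc : 0 < d - c := by
    obtain ⟨ε, hε, hball⟩ := Metric.mem_nhds_iff.1 (isOpen_interior.mem_nhds hz)
    have hmem : ∀ s : ℝ, |s| < ε → z + s • u ∈ P := by
      intro s hs
      apply interior_subset
      apply hball
      simp only [Metric.mem_ball, dist_eq_norm]
      simp [norm_smul, hu, abs_lt.1 hs, hs]
    have h1 : z + (ε/2) • u ∈ P := hmem _ (by rw [abs_of_pos (by linarith)]; linarith)
    have h2 : z + (-(ε/2)) • u ∈ P := hmem _ (by rw [abs_of_neg (by linarith)]; linarith)
    have hyshift : ∀ s : ℝ, y (z + s • u) = y z + s := by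
      intro s
      simp only [hydef]
      rw [inner_add_left, real_inner_smul_left, real_inner_self_eq_norm_sq, hu]
      norm_num
    have e1 := hdge _ h1
    have e2 := hcle _ h2
    rw [hyshift] at e1 e2
    linarith
  have hwid : width P = d - c := hwidth
  -- extreme points in the x direction
  obtain ⟨A, hA, hAmin'⟩ := hP.exists_isMinOn hne hxcont.continuousOn
  obtain ⟨B, hB, hBmax'⟩ := hP.exists_isMaxOn hne hxcont.continuousOn
  have hAmin : ∀ q ∈ P, x A ≤ x q := fun q hq => hAmin' hq
  have hBmax : ∀ q ∈ P, x q ≤ x B := fun q hq => hBmax' hq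
  -- step size
  set δ : ℝ := (d - c) / m with hδdef
  have hmR : (0:ℝ) < m := by exact_mod_cast hm
  have hδpos : 0 < δ := div_pos hdc hmR
  have hcmd : c + m * δ = d := by
    have := div_mul_cancel₀ (d - c) hmR.ne'
    rw [hδdef]; linear_combination this
  -- the image of y is an interval
  have hyint : ∀ t : ℝ, c ≤ t → t ≤ d → ∃ p ∈ P, y p = t := by
    intro t h1 h2
    have hconn : IsPreconnected (y '' P) := (hconv.isPreconnected).image y hycont.continuousOn
    obtain ⟨pc, hpc, hpcmin⟩ := hP.exists_isMinOn hne hycont.continuousOn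
    obtain ⟨pd, hpd, hpdmax⟩ := hP.exists_isMaxOn hne hycont.continuousOn
    have hceq : c = y pc := le_antisymm (hcle _ hpc) (le_csInf (hne.image y)
      (by rintro w ⟨p, hp, rfl⟩; exact hpcmin hp))
    have hdeq : d = y pd := le_antisymm (csSup_le (hne.image y)
      (by rintro w ⟨p, hp, rfl⟩; exact hpdmax hp)) (hdge _ hpd)
    have : t ∈ y '' P := by
      apply hconn.Icc_subset ⟨pc, hpc, hceq.symm⟩ ⟨pd, hpd, hdeq.symm⟩
      exact ⟨h1, h2⟩
    obtain ⟨p, hp, hpt⟩ := this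
    exact ⟨p, hp, hpt⟩
  -- slices and their extreme points
  have hslice : ∀ i : Fin (m+1), ∃ q ∈ P, y q = c + i.val * δ ∧
      (∀ r ∈ P, y r = c + i.val * δ → x q ≤ x r) := by
    intro i
    have hi : (i.val : ℝ) ≤ m := by exact_mod_cast Nat.lt_succ_iff.1 i.isLt
    have hlev1 : c ≤ c + i.val * δ := by
      have := mul_nonneg (Nat.cast_nonneg i.val : (0:ℝ) ≤ i.val) hδpos.le
      linarith
    have hlev2 : c + i.val * δ ≤ d := by
      have := mul_le_mul_of_nonneg_right hi hδpos.le
      linarith [hcmd]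
    have hSl : IsCompact (P ∩ y ⁻¹' {c + i.val * δ}) :=
      hP.inter_right (isClosed_singleton.preimage hycont)
    have hSlne : (P ∩ y ⁻¹' {c + i.val * δ}).Nonempty := by
      obtain ⟨p, hp, hpt⟩ := hyint _ hlev1 hlev2
      exact ⟨p, hp, hpt⟩
    obtain ⟨q, hq, hqmin⟩ := hSl.exists_isMinOn hSlne hxcont.continuousOn
    exact ⟨q, hq.1, hq.2, fun r hr hry => hqmin (Set.mem_inter hr hry)⟩
  have hslice' : ∀ i : Fin (m+1), ∃ q ∈ P, y q = c + i.val * δ ∧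
      (∀ r ∈ P, y r = c + i.val * δ → x r ≤ x q) := by
    intro i
    have hi : (i.val : ℝ) ≤ m := by exact_mod_cast Nat.lt_succ_iff.1 i.isLt
    have hlev1 : c ≤ c + i.val * δ := by
      have := mul_nonneg (Nat.cast_nonneg i.val : (0:ℝ) ≤ i.val) hδpos.le
      linarith
    have hlev2 : c + i.val * δ ≤ d := by
      have := mul_le_mul_of_nonneg_right hi hδpos.le
      linarith [hcmd]
    have hSl : IsCompact (P ∩ y ⁻¹' {c + i.val * δ}) :=
      hP.inter_right (isClosed_singleton.preimage hycont)
    have hSlne : (P ∩ y ⁻¹' {c + i.val * δ}).Nonempty := by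
      obtain ⟨p, hp, hpt⟩ := hyint _ hlev1 hlev2
      exact ⟨p, hp, hpt⟩
    obtain ⟨q, hq, hqmax⟩ := hSl.exists_isMaxOn hSlne hxcont.continuousOn
    exact ⟨q, hq.1, hq.2, fun r hr hry => hqmax (Set.mem_inter hr hry)⟩
  choose L hLP hLy hLmin using hslice
  choose R hRP hRy hRmax using hslice'
  -- the finite set
  set S : Finset Plane :=
    ((Finset.univ.image L ∪ Finset.univ.image R) ∪ {A, B}) with hSdef
  have hSsub : ↑S ⊆ P := by
    intro s hs
    simp only [hSdef, Finset.coe_union, Set.mem_union, Finset.coe_image, Finset.coe_univ,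
      Set.image_univ, Set.mem_range, Finset.coe_insert, Finset.coe_singleton,
      Set.mem_insert_iff, Set.mem_singleton_iff] at hs
    rcases hs with (⟨i, rfl⟩ | ⟨i, rfl⟩) | (rfl | rfl)
    · exact hLP i
    · exact hRP i
    · exact hA
    · exact hB
  have hScard : S.card ≤ 2 * m + 5 := by
    calc S.card ≤ (Finset.univ.image L ∪ Finset.univ.image R).card + ({A, B} : Finset Plane).card :=
          Finset.card_union_le _ _
      _ ≤ ((Finset.univ.image L).card + (Finset.univ.image R).card) + 2 := by
          gcongr
          · exact Finset.card_union_le _ _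
          · exact Finset.card_insert_le _ _ |>.trans (by simp)
      _ ≤ ((m+1) + (m+1)) + 2 := by
          gcongr <;> exact (Finset.card_image_le).trans (by simp)
      _ ≤ 2 * m + 5 := by omega
  have hhullP : convexHull ℝ (S : Set Plane) ⊆ P := convexHull_min hSsub hconv
  refine ⟨S, hSsub, hScard, hhullP, ?_⟩
  intro p hp
  -- membership of the chosen points in the hull
  have hmemS : ∀ q : Plane, q ∈ S → q ∈ convexHull ℝ (S : Set Plane) := by
    intro q hq
    exact subset_convexHull ℝ _ hq
  have hLhull : ∀ i, L i ∈ convexHull ℝ (S : Set Plane) := by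
    intro i
    apply hmemS
    simp [hSdef]
  have hRhull : ∀ i, R i ∈ convexHull ℝ (S : Set Plane) := by
    intro i
    apply hmemS
    simp [hSdef]
  have hAhull : A ∈ convexHull ℝ (S : Set Plane) := by apply hmemS; simp [hSdef]
  have hBhull : B ∈ convexHull ℝ (S : Set Plane) := by apply hmemS; simp [hSdef]
  have hcvx : Convex ℝ (convexHull ℝ (S : Set Plane)) := convex_convexHull ℝ _
  -- find the strip
  have hstrip : ∃ k : ℕ, k + 1 ≤ m ∧ c + k * δ ≤ y p ∧ y p ≤ c + (k+1) * δ := by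
    set t : ℝ := (y p - c) / δ with htdef
    have ht0 : 0 ≤ t := div_nonneg (by linarith [hcle p hp]) hδpos.le
    have htm : t ≤ m := by
      rw [div_le_iff₀ hδpos]
      have := hdge p hp
      nlinarith [hcmd]
    have hflo : (Nat.floor t : ℝ) ≤ t := Nat.floor_le ht0
    have hflo2 : t < Nat.floor t + 1 := Nat.lt_floor_add_one t
    have hyp : y p = c + t * δ := by rw [htdef, div_mul_cancel₀ _ hδpos.ne']; ring
    by_cases hcase : Nat.floor t ≤ m - 1
    · refine ⟨Nat.floor t, by omega, ?_, ?_⟩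
      · rw [hyp]; nlinarith
      · rw [hyp]; nlinarith
    · refine ⟨m - 1, by omega, ?_, ?_⟩
      · have hge : (m:ℝ) ≤ t := by
          have : m ≤ Nat.floor t := by omega
          calc (m:ℝ) ≤ (Nat.floor t : ℝ) := by exact_mod_cast this
            _ ≤ t := hflo
        have hc1 : ((m - 1 : ℕ) : ℝ) = (m:ℝ) - 1 := by
          have : (1:ℕ) ≤ m := hm
          push_cast [this]; ring
        rw [hyp, hc1]; nlinarith
      · have hc1 : ((m - 1 : ℕ) : ℝ) + 1 = (m:ℝ) := by
          have : (1:ℕ) ≤ m := hm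
          push_cast [this]; ring
        rw [hyp, hc1]; nlinarith
  obtain ⟨k, hkm, hk1, hk2⟩ := hstrip
  set k₀ : Fin (m+1) := ⟨k, by omega⟩ with hk₀def
  set k₁ : Fin (m+1) := ⟨k+1, by omega⟩ with hk₁def
  have hyL₀ : y (L k₀) = c + k * δ := by rw [hLy k₀]
  have hyL₁ : y (L k₁) = c + (k+1) * δ := by rw [hLy k₁]; show c + ((k+1 : ℕ) : ℝ) * δ = _; push_cast; ring
  have hyR₀ : y (R k₀) = c + k * δ := by rw [hRy k₀]
  have hyR₁ : y (R k₁) = c + (k+1) * δ := by rw [hRy k₁]; show c + ((k+1 : ℕ) : ℝ) * δ = _; push_cast; ring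
  have hLmin₀ : ∀ r ∈ P, y r = c + k * δ → x (L k₀) ≤ x r := by
    intro r hr hry
    exact hLmin k₀ r hr (by rw [hry, ← hyL₀, hLy k₀])
  have hLmin₁ : ∀ r ∈ P, y r = c + (k+1) * δ → x (L k₁) ≤ x r := by
    intro r hr hry
    exact hLmin k₁ r hr (by rw [hry, ← hyL₁, hLy k₁])
  have hRmax₀ : ∀ r ∈ P, y r = c + k * δ → x r ≤ x (R k₀) := by
    intro r hr hry
    exact hRmax k₀ r hr (by rw [hry, ← hyR₀, hRy k₀])
  have hRmax₁ : ∀ r ∈ P, y r = c + (k+1) * δ → x r ≤ x (R k₁) := by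
    intro r hr hry
    exact hRmax k₁ r hr (by rw [hry, ← hyR₁, hRy k₁])
  -- interpolation parameter
  set t : ℝ := (y p - (c + k * δ)) / δ with htdef
  have ht0 : 0 ≤ t := div_nonneg (by linarith) hδpos.le
  have ht1 : t ≤ 1 := by rw [div_le_one hδpos]; linarith
  set Pl : Plane := (1 - t) • L k₀ + t • L k₁ with hPldef
  set Pr : Plane := (1 - t) • R k₀ + t • R k₁ with hPrdef
  have hyPl : y Pl = y p := by
    rw [hPldef, hyaff _ _ _ _ (by ring), hyL₀, hyL₁]
    have htm : t * δ = y p - (c + k * δ) := div_mul_cancel₀ _ hδpos.ne'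
    linear_combination htm
  have hyPr : y Pr = y p := by
    rw [hPrdef, hyaff _ _ _ _ (by ring), hyR₀, hyR₁]
    have htm : t * δ = y p - (c + k * δ) := div_mul_cancel₀ _ hδpos.ne'
    linear_combination htm
  have hPlhull : Pl ∈ convexHull ℝ (S : Set Plane) :=
    hcvx (hLhull k₀) (hLhull k₁) (by linarith) (by linarith) (by ring)
  have hPrhull : Pr ∈ convexHull ℝ (S : Set Plane) :=
    hcvx (hRhull k₀) (hRhull k₁) (by linarith) (by linarith) (by ring)
  -- main claim: find q in the hull on the same vertical line, close in y
  suffices hfind : ∃ q ∈ convexHull ℝ (S : Set Plane), x q = x p ∧ |y q - y p| ≤ δ by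
    obtain ⟨q, hqh, hqx, hqy⟩ := hfind
    calc Metric.infDist p (convexHull ℝ (S : Set Plane)) ≤ dist p q :=
          Metric.infDist_le_dist_of_mem hqh
      _ = |y p - y q| := hdist p q hqx.symm
      _ ≤ δ := by rw [abs_sub_comm]; exact hqy
      _ = width P / m := by rw [hwid]
  rcases le_or_gt (x Pl) (x p) with hxl | hxl
  · rcases le_or_gt (x p) (x Pr) with hxr | hxr
    · -- p between the two chords: p itself is in the hull... find q on segment Pl Pr
      obtain ⟨q, hqseg, hqx, hqy1, hqy2⟩ := seg_coord x y hxaff hyaff Pl Pr (x p)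
        (le_trans (min_le_left _ _) hxl) (le_trans hxr (le_max_right _ _))
      refine ⟨q, hcvx.segment_subset hPlhull hPrhull hqseg, hqx, ?_⟩
      rw [hyPl, hyPr] at hqy1 hqy2
      simp only [min_self] at hqy1
      simp only [max_self] at hqy2
      have : y q = y p := le_antisymm hqy2 hqy1
      rw [this]
      simpa using hδpos.le
    · -- p to the right of the right chord
      rcases le_or_gt (x p) (max (x (R k₀)) (x (R k₁))) with hcase | hcase
      · have hminR : min (x (R k₀)) (x (R k₁)) ≤ x p := by
          have hPrx : x Pr = (1-t) * x (R k₀) + t * x (R k₁) := hxaff _ _ _ _ (by ring)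
          have h3 : (1-t) * min (x (R k₀)) (x (R k₁)) ≤ (1-t) * x (R k₀) :=
            mul_le_mul_of_nonneg_left (min_le_left _ _) (by linarith)
          have h4 : t * min (x (R k₀)) (x (R k₁)) ≤ t * x (R k₁) :=
            mul_le_mul_of_nonneg_left (min_le_right _ _) ht0
          linarith
        obtain ⟨q, hqseg, hqx, hqy1, hqy2⟩ := seg_coord x y hxaff hyaff (R k₀) (R k₁) (x p)
          hminR hcase
        refine ⟨q, hcvx.segment_subset (hRhull k₀) (hRhull k₁) hqseg, hqx, ?_⟩
        rw [hyR₀, hyR₁] at hqy1 hqy2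
        rw [abs_le]
        constructor
        · have : min (c + k*δ) (c + (k+1)*δ) = c + k*δ := by
            apply min_eq_left; linarith [hδpos.le]
          rw [this] at hqy1; linarith
        · have : max (c + k*δ) (c + (k+1)*δ) = c + (k+1)*δ := by
            apply max_eq_right; linarith [hδpos.le]
          rw [this] at hqy2; linarith
      · -- p beyond both R points: use B
        have hxpB : x p ≤ x B := hBmax p hp
        have hxR₀ : x (R k₀) < x p := lt_of_le_of_lt (le_max_left _ _) hcase
        have hxR₁ : x (R k₁) < x p := lt_of_le_of_lt (le_max_right _ _) hcase
        have hyB1 : c + k * δ ≤ y B := by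
          by_contra hcon
          push_neg at hcon
          obtain ⟨q, hqseg, hqy, hqx1, _⟩ := seg_coord y x hyaff hxaff B p (c + k * δ)
            (le_trans (min_le_left _ _) hcon.le) (le_trans hk1 (le_max_right _ _))
          have hqP : q ∈ P := hconv.segment_subset hB hp hqseg
          have hle : x q ≤ x (R k₀) := hRmax₀ q hqP hqy
          rw [min_eq_right hxpB] at hqx1
          linarith
        have hyB2 : y B ≤ c + (k+1) * δ := by
          by_contra hcon
          push_neg at hcon
          obtain ⟨q, hqseg, hqy, hqx1, _⟩ := seg_coord y x hyaff hxaff p B (c + (k+1) * δ)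
            (le_trans (min_le_left _ _) hk2) (le_trans hcon.le (le_max_right _ _))
          have hqP : q ∈ P := hconv.segment_subset hp hB hqseg
          have hle : x q ≤ x (R k₁) := hRmax₁ q hqP hqy
          rw [min_eq_left hxpB] at hqx1
          linarith
        obtain ⟨q, hqseg, hqx, hqy1, hqy2⟩ := seg_coord x y hxaff hyaff (R k₀) B (x p)
          (le_trans (min_le_left _ _) hxR₀.le) (le_trans hxpB (le_max_right _ _))
        refine ⟨q, hcvx.segment_subset (hRhull k₀) hBhull hqseg, hqx, ?_⟩
        have h1 : c + k * δ ≤ min (y (R k₀)) (y B) := le_min (le_of_eq hyR₀.symm) hyB1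
        have h2 : max (y (R k₀)) (y B) ≤ c + (k+1) * δ :=
          max_le (by rw [hyR₀]; linarith [hδpos.le]) hyB2
        rw [abs_le]
        constructor <;> linarith
  · -- p strictly to the left of the left chord
    rcases le_or_gt (min (x (L k₀)) (x (L k₁))) (x p) with hcase | hcase
    · -- between the extreme left points: q on segment L k₀ – L k₁
      have hPlx : x Pl = (1-t) * x (L k₀) + t * x (L k₁) := hxaff _ _ _ _ (by ring)
      have hmax : x p ≤ max (x (L k₀)) (x (L k₁)) := by
        have h3 : (1-t) * x (L k₀) ≤ (1-t) * max (x (L k₀)) (x (L k₁)) :=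
          mul_le_mul_of_nonneg_left (le_max_left _ _) (by linarith)
        have h4 : t * x (L k₁) ≤ t * max (x (L k₀)) (x (L k₁)) :=
          mul_le_mul_of_nonneg_left (le_max_right _ _) ht0
        linarith
      obtain ⟨q, hqseg, hqx, hqy1, hqy2⟩ := seg_coord x y hxaff hyaff (L k₀) (L k₁) (x p)
        hcase hmax
      refine ⟨q, hcvx.segment_subset (hLhull k₀) (hLhull k₁) hqseg, hqx, ?_⟩
      rw [hyL₀, hyL₁] at hqy1 hqy2
      rw [abs_le]
      constructor
      · have : min (c + k*δ) (c + (k+1)*δ) = c + k*δ := by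
          apply min_eq_left; linarith [hδpos.le]
        rw [this] at hqy1; linarith
      · have : max (c + k*δ) (c + (k+1)*δ) = c + (k+1)*δ := by
          apply max_eq_right; linarith [hδpos.le]
        rw [this] at hqy2; linarith
    · -- p strictly to the left of both extreme left points: use A
      have hxAp : x A ≤ x p := hAmin p hp
      have hxL₀ : x p < x (L k₀) := lt_of_lt_of_le hcase (min_le_left _ _)
      have hxL₁ : x p < x (L k₁) := lt_of_lt_of_le hcase (min_le_right _ _)
      have hyA1 : c + k * δ ≤ y A := by
        by_contra hcon
        push_neg at hcon
        obtain ⟨q, hqseg, hqy, _, hqx2⟩ := seg_coord y x hyaff hxaff A p (c + k * δ)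
          (le_trans (min_le_left _ _) hcon.le) (le_trans hk1 (le_max_right _ _))
        have hqP : q ∈ P := hconv.segment_subset hA hp hqseg
        have hle : x (L k₀) ≤ x q := hLmin₀ q hqP hqy
        rw [max_eq_right hxAp] at hqx2
        linarith
      have hyA2 : y A ≤ c + (k+1) * δ := by
        by_contra hcon
        push_neg at hcon
        obtain ⟨q, hqseg, hqy, _, hqx2⟩ := seg_coord y x hyaff hxaff p A (c + (k+1) * δ)
          (le_trans (min_le_left _ _) hk2) (le_trans hcon.le (le_max_right _ _))
        have hqP : q ∈ P := hconv.segment_subset hp hA hqseg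
        have hle : x (L k₁) ≤ x q := hLmin₁ q hqP hqy
        rw [max_eq_left hxAp] at hqx2
        linarith
      obtain ⟨q, hqseg, hqx, hqy1, hqy2⟩ := seg_coord x y hxaff hyaff A (L k₀) (x p)
        (le_trans (min_le_left _ _) hxAp) (le_trans hxL₀.le (le_max_right _ _))
      refine ⟨q, hcvx.segment_subset hAhull (hLhull k₀) hqseg, hqx, ?_⟩
      have h1 : c + k * δ ≤ min (y A) (y (L k₀)) := le_min hyA1 (le_of_eq hyL₀.symm)
      have h2 : max (y A) (y (L k₀)) ≤ c + (k+1) * δ :=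
        max_le hyA2 (by rw [hyL₀]; linarith [hδpos.le])
      rw [abs_le]
      constructor <;> linarith
end
end

section
/- Let X and Y be compact convex subsets of ℝ², and let v, u ∈ ℝ². Then the function f : ℝ → ℝ defined by f(x) = area(X ∩ (v + x·u + Y)) is quasiconcave, i.e., for all reals x₁ ≤ x₂ ≤ x₃ one has f(x₂) ≥ min(f(x₁), f(x₃)). Equivalently, the restriction of the overlap function of X and Y to any line is unimodal. -/
open MeasureTheory Pointwise

open Set Bornology

noncomputable section

lemma Ioo_subset_of_convex {S : Set ℝ} (hS : Convex ℝ S) (hne : S.Nonempty)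
    (hb : IsBounded S) : Ioo (sInf S) (sSup S) ⊆ S := by
  intro x hx
  obtain ⟨p, hp, hpx⟩ := exists_lt_of_csInf_lt hne hx.1
  obtain ⟨q, hq, hxq⟩ := exists_lt_of_lt_csSup hne hx.2
  exact hS.ordConnected.out hp hq ⟨hpx.le, hxq.le⟩

lemma vol_convex_1d {S : Set ℝ} (hS : Convex ℝ S) (hne : S.Nonempty)
    (hb : IsBounded S) : volume S = ENNReal.ofReal (sSup S - sInf S) := by
  obtain ⟨hbl, hbu⟩ := (isBounded_iff_bddBelow_bddAbove).1 hb
  refine le_antisymm ?_ ?_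
  · calc volume S ≤ volume (Icc (sInf S) (sSup S)) :=
          measure_mono (fun x hx => ⟨csInf_le hbl hx, le_csSup hbu hx⟩)
    _ = ENNReal.ofReal (sSup S - sInf S) := Real.volume_Icc
  · calc ENNReal.ofReal (sSup S - sInf S) = volume (Ioo (sInf S) (sSup S)) :=
          Real.volume_Ioo.symm
    _ ≤ volume S := measure_mono (Ioo_subset_of_convex hS hne hb)

lemma superadd_1d {S T : Set ℝ} (hS : Convex ℝ S) (hT : Convex ℝ T)
    (hSb : IsBounded S) (hTb : IsBounded T) (hSne : S.Nonempty) (hTne : T.Nonempty) :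
    volume S + volume T ≤ volume (S + T) := by
  obtain ⟨hSbl, hSbu⟩ := (isBounded_iff_bddBelow_bddAbove).1 hSb
  obtain ⟨hTbl, hTbu⟩ := (isBounded_iff_bddBelow_bddAbove).1 hTb
  set a := sInf S; set b := sSup S; set c := sInf T; set d := sSup T
  have hab : a ≤ b := csInf_le_csSup hSne hSbl hSbu
  have hcd : c ≤ d := csInf_le_csSup hTne hTbl hTbu
  have hIoo : Ioo (a + c) (b + d) ⊆ S + T := by
    intro z hz
    rcases lt_or_eq_of_le hab with hab' | hab'
    · rcases lt_or_eq_of_le hcd with hcd' | hcd'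
      · -- both nondegenerate
        have h1 : max a (z - d) < min b (z - c) := by
          rw [max_lt_iff, lt_min_iff, lt_min_iff]
          constructor
          · exact ⟨hab', by linarith [hz.1]⟩
          · exact ⟨by linarith [hz.2], by linarith⟩
        set x0 := (max a (z - d) + min b (z - c)) / 2 with hx0
        have hx0l : max a (z - d) < x0 := by rw [hx0]; linarith
        have hx0r : x0 < min b (z - c) := by rw [hx0]; linarith
        have hxS : x0 ∈ S := Ioo_subset_of_convex hS hSne hSb
          ⟨lt_of_le_of_lt (le_max_left _ _) hx0l, lt_of_lt_of_le hx0r (min_le_left _ _)⟩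
        have hyT : z - x0 ∈ T := Ioo_subset_of_convex hT hTne hTb
          ⟨by have := lt_of_lt_of_le hx0r (min_le_right _ _); linarith,
           by have := lt_of_le_of_lt (le_max_right _ _) hx0l; linarith⟩
        exact ⟨x0, hxS, z - x0, hyT, by ring⟩
      · -- T degenerate: c = d, so pick t ∈ T, and z - t ∈ Ioo a b
        obtain ⟨t, ht⟩ := hTne
        have htc : t = c := le_antisymm (by rw [hcd']; exact le_csSup hTbu ht) (csInf_le hTbl ht)
        have : z - t ∈ S := Ioo_subset_of_convex hS hSne hSb
          ⟨by rw [htc]; linarith [hz.1], by rw [htc]; linarith [hz.2, hcd'.ge]⟩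
        exact ⟨z - t, this, t, ht, by ring⟩
    · obtain ⟨s, hs⟩ := hSne
      have hsa : s = a := le_antisymm (by rw [hab']; exact le_csSup hSbu hs) (csInf_le hSbl hs)
      have : z - s ∈ T := Ioo_subset_of_convex hT hTne hTb
        ⟨by rw [hsa]; linarith [hz.1], by rw [hsa]; linarith [hz.2, hab'.ge]⟩
      exact ⟨s, hs, z - s, this, by ring⟩
  calc volume S + volume T
      = ENNReal.ofReal (b - a) + ENNReal.ofReal (d - c) := by
        rw [vol_convex_1d hS hSne hSb, vol_convex_1d hT hTne hTb]
    _ = ENNReal.ofReal ((b + d) - (a + c)) := by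
        rw [← ENNReal.ofReal_add (by linarith) (by linarith)]; ring_nf
    _ = volume (Ioo (a + c) (b + d)) := Real.volume_Ioo.symm
    _ ≤ volume (S + T) := measure_mono hIoo

lemma vol_smul_1d (a : ℝ) (S : Set ℝ) (ha : 0 ≤ a) :
    volume (a • S) = ENNReal.ofReal a * volume S := by
  rw [Measure.addHaar_smul, Module.finrank_self, pow_one, abs_of_nonneg ha]

lemma comb_1d {S T : Set ℝ} (hS : Convex ℝ S) (hT : Convex ℝ T)
    (hSb : IsBounded S) (hTb : IsBounded T) (hSne : S.Nonempty) (hTne : T.Nonempty)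
    {a b : ℝ} (ha : 0 ≤ a) (hb : 0 ≤ b) :
    ENNReal.ofReal a * volume S + ENNReal.ofReal b * volume T ≤ volume (a • S + b • T) := by
  have := superadd_1d (hS.smul a) (hT.smul b) (hSb.smul₀ a) (hTb.smul₀ b)
    (hSne.smul_set) (hTne.smul_set)
  rwa [vol_smul_1d a S ha, vol_smul_1d b T hb] at this

noncomputable def sv (S : Set (ℝ × ℝ)) (x : ℝ) : ℝ := (volume (Prod.mk x ⁻¹' S)).toReal

lemma slice_compact {S : Set (ℝ × ℝ)} (hS : IsCompact S) (x : ℝ) :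
    IsCompact (Prod.mk x ⁻¹' S) :=
  (hS.image continuous_snd).of_isClosed_subset
    (hS.isClosed.preimage (Continuous.prodMk_right x))
    (fun y hy => ⟨(x, y), hy, rfl⟩)

lemma slice_fin {S : Set (ℝ × ℝ)} (hS : IsCompact S) (x : ℝ) :
    volume (Prod.mk x ⁻¹' S) ≠ ⊤ := (slice_compact hS x).measure_lt_top.ne

lemma sv_nonneg (S : Set (ℝ × ℝ)) (x : ℝ) : 0 ≤ sv S x := ENNReal.toReal_nonneg

lemma sv_meas {S : Set (ℝ × ℝ)} (hS : MeasurableSet S) : Measurable (sv S) :=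
  (measurable_measure_prodMk_left hS).ennreal_toReal

lemma vol_eq_lint {S : Set (ℝ × ℝ)} (hS : IsCompact S) :
    volume S = ∫⁻ x, ENNReal.ofReal (sv S x) := by
  rw [show (volume : Measure (ℝ × ℝ)) = (volume : Measure ℝ).prod volume from rfl,
    Measure.prod_apply hS.isClosed.measurableSet]
  exact lintegral_congr fun x => (ENNReal.ofReal_toReal (slice_fin hS x)).symm

lemma slice_convex {S : Set (ℝ × ℝ)} (hS : Convex ℝ S) (x : ℝ) :
    Convex ℝ (Prod.mk x ⁻¹' S) := by
  intro y hy y' hy' a b ha hb hab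
  have h2 : a • (x, y) + b • (x, y') = (x, a • y + b • y') := by
    simp only [Prod.smul_mk, Prod.mk_add_mk, smul_eq_mul, Prod.mk.injEq]
    constructor <;> first | rw [← add_mul, hab, one_mul] | trivial
  have := hS hy hy' ha hb hab
  rwa [h2] at this

lemma sv_bm {A B C : Set (ℝ × ℝ)} {a b : ℝ} (ha : 0 ≤ a) (hb : 0 ≤ b)
    (hsub : a • A + b • B ⊆ C) (x₁ x₂ : ℝ)
    (hA : IsCompact A) (hAc : Convex ℝ A) (hB : IsCompact B) (hBc : Convex ℝ B)
    (hCfin : volume (Prod.mk (a * x₁ + b * x₂) ⁻¹' C) ≠ ⊤)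
    (hne1 : (Prod.mk x₁ ⁻¹' A).Nonempty) (hne2 : (Prod.mk x₂ ⁻¹' B).Nonempty) :
    a * sv A x₁ + b * sv B x₂ ≤ sv C (a * x₁ + b * x₂) := by
  have hsl : a • (Prod.mk x₁ ⁻¹' A) + b • (Prod.mk x₂ ⁻¹' B) ⊆
      Prod.mk (a * x₁ + b * x₂) ⁻¹' C := by
    rintro z ⟨p, ⟨y₁, hy₁, rfl⟩, q, ⟨y₂, hy₂, rfl⟩, rfl⟩
    have h2 : (a * x₁ + b * x₂, a • y₁ + b • y₂) = a • (x₁, y₁) + b • (x₂, y₂) := by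
      simp [Prod.ext_iff, smul_eq_mul]
    show (a * x₁ + b * x₂, a • y₁ + b • y₂) ∈ C
    rw [h2]
    exact hsub (Set.add_mem_add (Set.smul_mem_smul_set hy₁) (Set.smul_mem_smul_set hy₂))
  have hvol : ENNReal.ofReal a * volume (Prod.mk x₁ ⁻¹' A)
      + ENNReal.ofReal b * volume (Prod.mk x₂ ⁻¹' B)
      ≤ volume (Prod.mk (a * x₁ + b * x₂) ⁻¹' C) :=
    le_trans
      (comb_1d (slice_convex hAc x₁) (slice_convex hBc x₂)
        (slice_compact hA x₁).isBounded (slice_compact hB x₂).isBounded hne1 hne2 ha hb)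
      (measure_mono hsl)
  have hfin1 : ENNReal.ofReal a * volume (Prod.mk x₁ ⁻¹' A) ≠ ⊤ :=
    ENNReal.mul_ne_top ENNReal.ofReal_ne_top (slice_fin hA x₁)
  have hfin2 : ENNReal.ofReal b * volume (Prod.mk x₂ ⁻¹' B) ≠ ⊤ :=
    ENNReal.mul_ne_top ENNReal.ofReal_ne_top (slice_fin hB x₂)
  have := ENNReal.toReal_mono hCfin hvol
  rwa [ENNReal.toReal_add hfin1 hfin2, ENNReal.toReal_mul, ENNReal.toReal_mul,
    ENNReal.toReal_ofReal ha, ENNReal.toReal_ofReal hb] at this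

lemma lc {S : Set (ℝ × ℝ)} (hS : IsCompact S) {c : ℝ} (hc : 0 < c) :
    volume S * ENNReal.ofReal (1/c) = ∫⁻ s in Ioi (0:ℝ), volume {x | s * c < sv S x} := by
  have hmeas : Measurable (sv S) := sv_meas hS.isClosed.measurableSet
  have h1 := lintegral_eq_lintegral_meas_lt (volume : Measure ℝ)
    (ae_of_all _ fun x => div_nonneg (sv_nonneg S x) hc.le)
    ((hmeas.div_const c).aemeasurable)
  have hset : ∀ s : ℝ, {a | s < sv S a / c} = {x | s * c < sv S x} := fun s => by
    ext x; exact lt_div_iff₀ hc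
  calc volume S * ENNReal.ofReal (1/c)
      = ∫⁻ x, ENNReal.ofReal (sv S x) * ENNReal.ofReal (1/c) := by
        rw [vol_eq_lint hS, lintegral_mul_const _ hmeas.ennreal_ofReal]
    _ = ∫⁻ x, ENNReal.ofReal (sv S x / c) := by
        congr 1; funext x; rw [one_div, division_def, ENNReal.ofReal_mul (sv_nonneg S x)]
    _ = ∫⁻ s in Ioi (0:ℝ), volume {a | s < sv S a / c} := h1
    _ = ∫⁻ s in Ioi (0:ℝ), volume {x | s * c < sv S x} := by simp_rw [hset]

theorem minBM {A B C : Set (ℝ × ℝ)} (hA : IsCompact A) (hAc : Convex ℝ A)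
    (hB : IsCompact B) (hBc : Convex ℝ B) (hC : IsCompact C)
    {l : ℝ} (hl0 : 0 < l) (hl1 : l < 1)
    (hsub : l • A + (1 - l) • B ⊆ C) :
    min (volume A) (volume B) ≤ volume C := by
  rcases eq_or_ne (volume A) 0 with h0 | hA0
  · exact le_trans (min_le_left _ _) (by rw [h0]; exact zero_le)
  rcases eq_or_ne (volume B) 0 with h0 | hB0
  · exact le_trans (min_le_right _ _) (by rw [h0]; exact zero_le)
  have hl1' : (0:ℝ) < 1 - l := by linarith
  have hbddA : BddAbove (Set.range (sv A)) := by
    refine ⟨(volume (Prod.snd '' A)).toReal, ?_⟩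
    rintro y ⟨x, rfl⟩
    exact ENNReal.toReal_mono (hA.image continuous_snd).measure_lt_top.ne
      (measure_mono fun y hy => ⟨(x, y), hy, rfl⟩)
  have hbddB : BddAbove (Set.range (sv B)) := by
    refine ⟨(volume (Prod.snd '' B)).toReal, ?_⟩
    rintro y ⟨x, rfl⟩
    exact ENNReal.toReal_mono (hB.image continuous_snd).measure_lt_top.ne
      (measure_mono fun y hy => ⟨(x, y), hy, rfl⟩)
  set Mf := sSup (Set.range (sv A)) with hMfdef
  set Mg := sSup (Set.range (sv B)) with hMgdef
  have hfM : ∀ x, sv A x ≤ Mf := fun x => le_csSup hbddA ⟨x, rfl⟩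
  have hgM : ∀ x, sv B x ≤ Mg := fun x => le_csSup hbddB ⟨x, rfl⟩
  have hMf0 : 0 < Mf := by
    by_contra hcon
    push_neg at hcon
    apply hA0
    rw [vol_eq_lint hA]
    have hz : ∀ x, ENNReal.ofReal (sv A x) = 0 := fun x =>
      ENNReal.ofReal_eq_zero.2 (le_trans (hfM x) hcon)
    simp [hz]
  have hMg0 : 0 < Mg := by
    by_contra hcon
    push_neg at hcon
    apply hB0
    rw [vol_eq_lint hB]
    have hz : ∀ x, ENNReal.ofReal (sv B x) = 0 := fun x =>
      ENNReal.ofReal_eq_zero.2 (le_trans (hgM x) hcon)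
    simp [hz]
  set M := l * Mf + (1 - l) * Mg with hMdef
  have hM0 : 0 < M := by nlinarith [mul_pos hl0 hMf0, mul_pos hl1' hMg0]
  -- pointwise key inequality
  have key : ∀ s ∈ Ioi (0:ℝ),
      volume {x | s * Mf < sv A x} * ENNReal.ofReal l
        + volume {x | s * Mg < sv B x} * ENNReal.ofReal (1 - l)
        ≤ volume {x | s * M < sv C x} := by
    intro s hs
    have hs0 : (0:ℝ) < s := mem_Ioi.1 hs
    rcases lt_or_ge s 1 with hs1 | hs1
    · set Sf := {x | s * Mf < sv A x} with hSfdef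
      set Sg := {x | s * Mg < sv B x} with hSgdef
      have hsliceA : ∀ x ∈ Sf, (Prod.mk x ⁻¹' A).Nonempty := by
        intro x hx
        refine nonempty_of_measure_ne_zero (μ := volume) (fun hzero => ?_)
        have hz : sv A x = 0 := by simp [sv, hzero]
        have hx' : s * Mf < sv A x := hx
        nlinarith [mul_pos hs0 hMf0]
      have hsliceB : ∀ x ∈ Sg, (Prod.mk x ⁻¹' B).Nonempty := by
        intro x hx
        refine nonempty_of_measure_ne_zero (μ := volume) (fun hzero => ?_)
        have hz : sv B x = 0 := by simp [sv, hzero]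
        have hx' : s * Mg < sv B x := hx
        nlinarith [mul_pos hs0 hMg0]
      have hSfne : Sf.Nonempty := by
        obtain ⟨y, ⟨x, rfl⟩, hy⟩ := exists_lt_of_lt_csSup (Set.range_nonempty (sv A))
          (show s * Mf < Mf by nlinarith)
        exact ⟨x, hy⟩
      have hSgne : Sg.Nonempty := by
        obtain ⟨y, ⟨x, rfl⟩, hy⟩ := exists_lt_of_lt_csSup (Set.range_nonempty (sv B))
          (show s * Mg < Mg by nlinarith)
        exact ⟨x, hy⟩
      have hSfconv : Convex ℝ Sf := by
        intro x₁ hx₁ x₂ hx₂ a b ha hb hab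
        have hbm := sv_bm ha hb (hAc.set_combo_subset ha hb hab) x₁ x₂ hA hAc hA hAc
          (slice_fin hA _) (hsliceA x₁ hx₁) (hsliceA x₂ hx₂)
        show s * Mf < sv A (a • x₁ + b • x₂)
        have he : a • x₁ + b • x₂ = a * x₁ + b * x₂ := rfl
        rw [he]
        have h1 : s * Mf < sv A x₁ := hx₁
        have h2 : s * Mf < sv A x₂ := hx₂
        have hrw : s * Mf = a * (s * Mf) + b * (s * Mf) := by rw [← add_mul, hab, one_mul]
        calc s * Mf = a * (s * Mf) + b * (s * Mf) := hrw
          _ < a * sv A x₁ + b * sv A x₂ := by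
              rcases eq_or_lt_of_le ha with ha' | ha'
              · have hb1 : b = 1 := by linarith
                simp only [← ha', hb1, zero_mul, one_mul, zero_add]
                exact h2
              · exact add_lt_add_of_lt_of_le (mul_lt_mul_of_pos_left h1 ha')
                  (mul_le_mul_of_nonneg_left h2.le hb)
          _ ≤ sv A (a * x₁ + b * x₂) := hbm
      have hSgconv : Convex ℝ Sg := by
        intro x₁ hx₁ x₂ hx₂ a b ha hb hab
        have hbm := sv_bm ha hb (hBc.set_combo_subset ha hb hab) x₁ x₂ hB hBc hB hBc
          (slice_fin hB _) (hsliceB x₁ hx₁) (hsliceB x₂ hx₂)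
        show s * Mg < sv B (a • x₁ + b • x₂)
        have he : a • x₁ + b • x₂ = a * x₁ + b * x₂ := rfl
        rw [he]
        have h1 : s * Mg < sv B x₁ := hx₁
        have h2 : s * Mg < sv B x₂ := hx₂
        have hrw : s * Mg = a * (s * Mg) + b * (s * Mg) := by rw [← add_mul, hab, one_mul]
        calc s * Mg = a * (s * Mg) + b * (s * Mg) := hrw
          _ < a * sv B x₁ + b * sv B x₂ := by
              rcases eq_or_lt_of_le ha with ha' | ha'
              · have hb1 : b = 1 := by linarith
                simp only [← ha', hb1, zero_mul, one_mul, zero_add]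
                exact h2
              · exact add_lt_add_of_lt_of_le (mul_lt_mul_of_pos_left h1 ha')
                  (mul_le_mul_of_nonneg_left h2.le hb)
          _ ≤ sv B (a * x₁ + b * x₂) := hbm
      have hSfbdd : IsBounded Sf := ((hA.image continuous_fst).isBounded).subset
        (fun x hx => (hsliceA x hx).elim fun y hy => ⟨(x, y), hy, rfl⟩)
      have hSgbdd : IsBounded Sg := ((hB.image continuous_fst).isBounded).subset
        (fun x hx => (hsliceB x hx).elim fun y hy => ⟨(x, y), hy, rfl⟩)
      have hincl : l • Sf + (1 - l) • Sg ⊆ {x | s * M < sv C x} := by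
        rintro z ⟨p, ⟨x₁, hx₁, rfl⟩, q, ⟨x₂, hx₂, rfl⟩, rfl⟩
        have hbm := sv_bm hl0.le hl1'.le hsub x₁ x₂ hA hAc hB hBc (slice_fin hC _)
          (hsliceA x₁ hx₁) (hsliceB x₂ hx₂)
        show s * M < sv C (l • x₁ + (1 - l) • x₂)
        have he : l • x₁ + (1 - l) • x₂ = l * x₁ + (1 - l) * x₂ := rfl
        rw [he]
        have h1 : s * Mf < sv A x₁ := hx₁
        have h2 : s * Mg < sv B x₂ := hx₂
        nlinarith [mul_lt_mul_of_pos_left h1 hl0, mul_lt_mul_of_pos_left h2 hl1']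
      calc volume Sf * ENNReal.ofReal l + volume Sg * ENNReal.ofReal (1 - l)
          = ENNReal.ofReal l * volume Sf + ENNReal.ofReal (1 - l) * volume Sg := by
            rw [mul_comm, mul_comm (volume Sg)]
        _ ≤ volume (l • Sf + (1 - l) • Sg) :=
            comb_1d hSfconv hSgconv hSfbdd hSgbdd hSfne hSgne hl0.le hl1'.le
        _ ≤ volume {x | s * M < sv C x} := measure_mono hincl
    · have he1 : {x | s * Mf < sv A x} = ∅ := by
        ext x
        simp only [mem_setOf_eq, mem_empty_iff_false, iff_false, not_lt]
        calc sv A x ≤ Mf := hfM x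
          _ ≤ s * Mf := le_mul_of_one_le_left hMf0.le hs1
      have he2 : {x | s * Mg < sv B x} = ∅ := by
        ext x
        simp only [mem_setOf_eq, mem_empty_iff_false, iff_false, not_lt]
        calc sv B x ≤ Mg := hgM x
          _ ≤ s * Mg := le_mul_of_one_le_left hMg0.le hs1
      rw [he1, he2]
      simp
  -- antitonicity for measurability
  have hantiA : Antitone (fun s : ℝ => volume {x | s * Mf < sv A x}) := fun s s' hss =>
    measure_mono fun x hx => lt_of_le_of_lt (mul_le_mul_of_nonneg_right hss hMf0.le) hx
  have hantiB : Antitone (fun s : ℝ => volume {x | s * Mg < sv B x}) := fun s s' hss =>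
    measure_mono fun x hx => lt_of_le_of_lt (mul_le_mul_of_nonneg_right hss hMg0.le) hx
  have hantiC : Antitone (fun s : ℝ => volume {x | s * M < sv C x}) := fun s s' hss =>
    measure_mono fun x hx => lt_of_le_of_lt (mul_le_mul_of_nonneg_right hss hM0.le) hx
  have big : volume A * ENNReal.ofReal (1/Mf) * ENNReal.ofReal l
      + volume B * ENNReal.ofReal (1/Mg) * ENNReal.ofReal (1 - l)
      ≤ volume C * ENNReal.ofReal (1/M) := by
    rw [lc hA hMf0, lc hB hMg0, lc hC hM0,
      lintegral_mul_const _ hantiA.measurable |>.symm,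
      lintegral_mul_const _ hantiB.measurable |>.symm,
      ← lintegral_add_left (hantiA.measurable.mul_const _)]
    exact setLIntegral_mono hantiC.measurable key
  set m := min (volume A) (volume B) with hmdef
  have big2 : m * ENNReal.ofReal (1/Mf * l) + m * ENNReal.ofReal (1/Mg * (1 - l))
      ≤ volume C * ENNReal.ofReal (1/M) := by
    refine le_trans (add_le_add ?_ ?_) big
    · rw [ENNReal.ofReal_mul (by positivity), ← mul_assoc]
      exact mul_le_mul_left (mul_le_mul_left (min_le_left _ _) _) _
    · rw [ENNReal.ofReal_mul (by positivity), ← mul_assoc]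
      exact mul_le_mul_left (mul_le_mul_left (min_le_right _ _) _) _
  have hreal : 1 ≤ (1/Mf * l + 1/Mg * (1 - l)) * M := by
    have key2 : Mf * Mg ≤ (l * Mg + (1 - l) * Mf) * (l * Mf + (1 - l) * Mg) := by
      nlinarith [sq_nonneg (Mf - Mg), mul_pos hl0 hl1']
    have heq : (1/Mf * l + 1/Mg * (1 - l)) * M
        = ((l * Mg + (1 - l) * Mf) * (l * Mf + (1 - l) * Mg)) / (Mf * Mg) := by
      rw [hMdef]; field_simp; try ring
    rw [heq, le_div_iff₀ (mul_pos hMf0 hMg0), one_mul]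
    exact key2
  calc m = m * 1 := (mul_one m).symm
    _ ≤ m * ENNReal.ofReal ((1/Mf * l + 1/Mg * (1 - l)) * M) := by
        refine mul_le_mul_right ?_ m
        rw [← ENNReal.ofReal_one]
        exact ENNReal.ofReal_le_ofReal hreal
    _ = m * (ENNReal.ofReal (1/Mf * l + 1/Mg * (1 - l)) * ENNReal.ofReal M) := by
        rw [ENNReal.ofReal_mul (by positivity)]
    _ = m * ENNReal.ofReal (1/Mf * l + 1/Mg * (1 - l)) * ENNReal.ofReal M :=
        (mul_assoc _ _ _).symm
    _ = (m * ENNReal.ofReal (1/Mf * l) + m * ENNReal.ofReal (1/Mg * (1 - l)))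
          * ENNReal.ofReal M := by
        rw [ENNReal.ofReal_add (by positivity) (by positivity), mul_add]
    _ ≤ volume C * ENNReal.ofReal (1/M) * ENNReal.ofReal M := mul_le_mul_left big2 _
    _ = volume C * ENNReal.ofReal (1/M * M) := by
        rw [mul_assoc, ← ENNReal.ofReal_mul (by positivity)]
    _ = volume C := by rw [one_div_mul_cancel hM0.ne', ENNReal.ofReal_one, mul_one]

noncomputable def Φ : Plane ≃ₜ ℝ × ℝ :=
  (PiLp.continuousLinearEquiv 2 ℝ (fun _ : Fin 2 => ℝ)).toHomeomorph.trans
    (Homeomorph.piFinTwo (fun _ : Fin 2 => ℝ))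


lemma hmpΦ : MeasurePreserving (⇑Φ) volume volume :=
  (volume_preserving_piFinTwo (fun _ : Fin 2 => ℝ)).comp
    (EuclideanSpace.volume_preserving_symm_measurableEquiv_toLp (Fin 2))

lemma volΦ {S : Set Plane} (hS : IsCompact S) : volume (Φ '' S) = volume S := by
  have h1 := hmpΦ.measure_preimage
    ((hS.image Φ.continuous).isClosed.measurableSet).nullMeasurableSet
  calc volume (Φ '' S) = volume (Φ ⁻¹' (Φ '' S)) := h1.symm
    _ = volume S := by rw [Set.preimage_image_eq S Φ.injective]

lemma convΦ {S : Set Plane} (hS : Convex ℝ S) : Convex ℝ (Φ '' S) := by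
  rintro _ ⟨p, hp, rfl⟩ _ ⟨q, hq, rfl⟩ a b ha hb hab
  exact ⟨a • p + b • q, hS hp hq ha hb hab, rfl⟩

theorem overlap_unimodal_on_lines (X Y : Set Plane)
    (hXcomp : IsCompact X) (hXconv : Convex ℝ X)
    (hYcomp : IsCompact Y) (hYconv : Convex ℝ Y) (v u : Plane) :
    ∀ x₁ x₂ x₃ : ℝ, x₁ ≤ x₂ → x₂ ≤ x₃ →
      min (volume (X ∩ ((v + x₁ • u) +ᵥ Y))) (volume (X ∩ ((v + x₃ • u) +ᵥ Y)))
        ≤ volume (X ∩ ((v + x₂ • u) +ᵥ Y)) := by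
  intro x₁ x₂ x₃ h12 h23
  -- basic facts about the three sets
  have hYt : ∀ t : Plane, IsCompact (t +ᵥ Y) := fun t => by
    rw [← Set.image_vadd]
    exact hYcomp.image (continuous_const_vadd t)
  have hYtc : ∀ t : Plane, Convex ℝ (t +ᵥ Y) := fun t => hYconv.vadd t
  have hcomp : ∀ t : Plane, IsCompact (X ∩ (t +ᵥ Y)) := fun t =>
    hXcomp.inter_right (hYt t).isClosed
  have hconv : ∀ t : Plane, Convex ℝ (X ∩ (t +ᵥ Y)) := fun t =>
    hXconv.inter (hYtc t)
  rcases eq_or_lt_of_le h12 with h12' | h12'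
  · rw [← h12']
    exact min_le_left _ _
  rcases eq_or_lt_of_le h23 with h23' | h23'
  · rw [h23']
    exact min_le_right _ _
  -- now x₁ < x₂ < x₃
  set l := (x₃ - x₂) / (x₃ - x₁) with hldef
  have h13 : x₁ < x₃ := h12'.trans h23'
  have hl0 : 0 < l := div_pos (by linarith) (by linarith)
  have hl1 : l < 1 := (div_lt_one (by linarith)).2 (by linarith)
  have hne : x₃ - x₁ ≠ 0 := sub_ne_zero.2 h13.ne'
  have hx2 : x₂ = l * x₁ + (1 - l) * x₃ := by
    rw [hldef]; field_simp; ring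
  set A₁ := X ∩ ((v + x₁ • u) +ᵥ Y) with hA₁
  set A₂ := X ∩ ((v + x₂ • u) +ᵥ Y) with hA₂
  set A₃ := X ∩ ((v + x₃ • u) +ᵥ Y) with hA₃
  have hincl : l • A₁ + (1 - l) • A₃ ⊆ A₂ := by
    rintro z ⟨p, ⟨p₀, hp₀, rfl⟩, q, ⟨q₀, hq₀, rfl⟩, rfl⟩
    refine ⟨hXconv hp₀.1 hq₀.1 hl0.le (by linarith) (by ring), ?_⟩
    obtain ⟨y₁, hy₁, hpe⟩ := hp₀.2
    obtain ⟨y₃, hy₃, hqe⟩ := hq₀.2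
    refine ⟨l • y₁ + (1 - l) • y₃, hYconv hy₁ hy₃ hl0.le (by linarith) (by ring), ?_⟩
    rw [← hpe, ← hqe]
    show (v + x₂ • u) + (l • y₁ + (1 - l) • y₃)
        = l • ((v + x₁ • u) + y₁) + (1 - l) • ((v + x₃ • u) + y₃)
    rw [hx2]
    module
  -- transfer to ℝ × ℝ
  have hinclΦ : l • (Φ '' A₁) + (1 - l) • (Φ '' A₃) ⊆ Φ '' A₂ := by
    rintro z ⟨p', ⟨_, ⟨p, hp, rfl⟩, rfl⟩, q', ⟨_, ⟨q, hq, rfl⟩, rfl⟩, rfl⟩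
    exact ⟨l • p + (1 - l) • q,
      hincl (Set.add_mem_add (Set.smul_mem_smul_set hp) (Set.smul_mem_smul_set hq)), rfl⟩
  have hmain := minBM ((hcomp _).image Φ.continuous) (convΦ (hconv _))
    ((hcomp _).image Φ.continuous) (convΦ (hconv _))
    ((hcomp _).image Φ.continuous) hl0 hl1 hinclΦ
  rwa [volΦ (hcomp _), volΦ (hcomp _), volΦ (hcomp _)] at hmain
end
end

section
/- Let X and Y be compact convex subsets of ℝ² and let α ∈ ℝ. Then the superlevel set {t ∈ ℝ² : area(X ∩ (t + Y)) ≥ α} of the overlap function is a convex subset of ℝ². -/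
open MeasureTheory Pointwise

noncomputable section

open Set Bornology
open scoped ENNReal

namespace OverlapAux

/-- vertical slice -/
def slc (s : Set (ℝ × ℝ)) (x : ℝ) : Set ℝ := {y | (x, y) ∈ s}

/-- width of the vertical slice -/
def wdt (s : Set (ℝ × ℝ)) (x : ℝ) : ℝ := (volume (slc s x)).toReal

lemma wdt_nonneg (s : Set (ℝ × ℝ)) (x : ℝ) : 0 ≤ wdt s x := ENNReal.toReal_nonneg

lemma isCompact_slc {s : Set (ℝ × ℝ)} (hs : IsCompact s) (x : ℝ) : IsCompact (slc s x) := by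
  have h : slc s x = Prod.snd '' (s ∩ {p : ℝ × ℝ | p.1 = x}) := by
    ext y
    constructor
    · intro hy; exact ⟨(x, y), ⟨hy, rfl⟩, rfl⟩
    · rintro ⟨⟨px, py⟩, ⟨hmem, hx⟩, rfl⟩
      simp only [mem_setOf_eq] at hx
      subst hx; exact hmem
  rw [h]
  exact (hs.inter_right (isClosed_singleton.preimage continuous_fst)).image continuous_snd

lemma convex_slc {s : Set (ℝ × ℝ)} (hs : Convex ℝ s) (x : ℝ) : Convex ℝ (slc s x) := by
  intro y₁ h₁ y₂ h₂ a b ha hb hab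
  have h := hs h₁ h₂ ha hb hab
  have he : a • ((x, y₁) : ℝ × ℝ) + b • (x, y₂) = (x, a • y₁ + b • y₂) := by
    simp [Prod.ext_iff, smul_eq_mul, ← add_mul, hab]
  rw [he] at h
  exact h

lemma eq_Icc_of_compact_convex {I : Set ℝ} (hI : IsCompact I) (hc : Convex ℝ I)
    (hne : I.Nonempty) : I = Icc (sInf I) (sSup I) := by
  apply Subset.antisymm
  · intro y hy
    exact ⟨csInf_le hI.bddBelow hy, le_csSup hI.bddAbove hy⟩
  · exact hc.ordConnected.out (hI.sInf_mem hne) (hI.sSup_mem hne)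

lemma sInf_le_sSup_of_compact {I : Set ℝ} (hI : IsCompact I) (hne : I.Nonempty) :
    sInf I ≤ sSup I := by
  obtain ⟨y, hy⟩ := hne
  exact (csInf_le hI.bddBelow hy).trans (le_csSup hI.bddAbove hy)

lemma wdt_eq {s : Set (ℝ × ℝ)} (hcpt : IsCompact s) (hconv : Convex ℝ s) {x : ℝ}
    (hne : (slc s x).Nonempty) :
    wdt s x = sSup (slc s x) - sInf (slc s x) := by
  have h := eq_Icc_of_compact_convex (isCompact_slc hcpt x) (convex_slc hconv x) hne
  have key : volume (slc s x) = ENNReal.ofReal (sSup (slc s x) - sInf (slc s x)) := by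
    conv_lhs => rw [h]
    rw [Real.volume_Icc]
  rw [wdt, key, ENNReal.toReal_ofReal (sub_nonneg.2 (sInf_le_sSup_of_compact (isCompact_slc hcpt x) hne))]

lemma slc_nonempty_of_wdt_pos {s : Set (ℝ × ℝ)} {x : ℝ} (h : 0 < wdt s x) :
    (slc s x).Nonempty := by
  rcases (slc s x).eq_empty_or_nonempty with he | hne
  · exfalso; rw [wdt, he] at h; simp at h
  · exact hne

/-- The fundamental width concavity inequality across three sets. -/
lemma wdt_combo {A B C : Set (ℝ × ℝ)} (hA : IsCompact A) (hAc : Convex ℝ A)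
    (hB : IsCompact B) (hBc : Convex ℝ B) (hC : IsCompact C) (hCc : Convex ℝ C)
    {a b : ℝ} (ha : 0 ≤ a) (hb : 0 ≤ b) (hab : a + b = 1)
    (hP : ∀ p ∈ A, ∀ q ∈ B, a • p + b • q ∈ C)
    {x₁ x₂ : ℝ} (h1 : (slc A x₁).Nonempty) (h2 : (slc B x₂).Nonempty) :
    a * wdt A x₁ + b * wdt B x₂ ≤ wdt C (a * x₁ + b * x₂) := by
  set i₁ := sInf (slc A x₁)
  set s₁ := sSup (slc A x₁)
  set i₂ := sInf (slc B x₂)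
  set s₂ := sSup (slc B x₂)
  have hi₁ : i₁ ∈ slc A x₁ := (isCompact_slc hA x₁).sInf_mem h1
  have hs₁ : s₁ ∈ slc A x₁ := (isCompact_slc hA x₁).sSup_mem h1
  have hi₂ : i₂ ∈ slc B x₂ := (isCompact_slc hB x₂).sInf_mem h2
  have hs₂ : s₂ ∈ slc B x₂ := (isCompact_slc hB x₂).sSup_mem h2
  have htop : a * s₁ + b * s₂ ∈ slc C (a * x₁ + b * x₂) := by
    have := hP (x₁, s₁) hs₁ (x₂, s₂) hs₂
    simpa [Prod.ext_iff, smul_eq_mul, slc] using this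
  have hbot : a * i₁ + b * i₂ ∈ slc C (a * x₁ + b * x₂) := by
    have := hP (x₁, i₁) hi₁ (x₂, i₂) hi₂
    simpa [Prod.ext_iff, smul_eq_mul, slc] using this
  have hCne : (slc C (a * x₁ + b * x₂)).Nonempty := ⟨_, htop⟩
  have hCcpt := isCompact_slc hC (a * x₁ + b * x₂)
  rw [wdt_eq hA hAc h1, wdt_eq hB hBc h2, wdt_eq hC hCc hCne]
  have h3 : a * s₁ + b * s₂ ≤ sSup (slc C (a * x₁ + b * x₂)) := le_csSup hCcpt.bddAbove htop
  have h4 : sInf (slc C (a * x₁ + b * x₂)) ≤ a * i₁ + b * i₂ := csInf_le hCcpt.bddBelow hbot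
  nlinarith


lemma Ioo_subset_of_convex {S : Set ℝ} (hS : Convex ℝ S) (hne : S.Nonempty) :
    Ioo (sInf S) (sSup S) ⊆ S := by
  intro u hu
  obtain ⟨p, hp, hpu⟩ := exists_lt_of_csInf_lt hne hu.1
  obtain ⟨q, hq, huq⟩ := exists_lt_of_lt_csSup hne hu.2
  exact hS.ordConnected.out hp hq ⟨hpu.le, huq.le⟩

lemma sInf_le_sSup_of_bounded {S : Set ℝ} (hb : IsBounded S) (hne : S.Nonempty) :
    sInf S ≤ sSup S := by
  obtain ⟨y, hy⟩ := hne
  exact (csInf_le hb.bddBelow hy).trans (le_csSup hb.bddAbove hy)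

lemma volume_convex {S : Set ℝ} (hS : Convex ℝ S) (hb : IsBounded S) (hne : S.Nonempty) :
    volume S = ENNReal.ofReal (sSup S - sInf S) := by
  apply le_antisymm
  · calc volume S ≤ volume (Icc (sInf S) (sSup S)) := by
          apply measure_mono
          intro y hy
          exact ⟨csInf_le hb.bddBelow hy, le_csSup hb.bddAbove hy⟩
      _ = ENNReal.ofReal (sSup S - sInf S) := Real.volume_Icc
  · calc ENNReal.ofReal (sSup S - sInf S) = volume (Ioo (sInf S) (sSup S)) :=
          Real.volume_Ioo.symm
      _ ≤ volume S := measure_mono (Ioo_subset_of_convex hS hne)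

lemma mem_of_convex_interp {S : Set ℝ} (hS : Convex ℝ S) (hb : IsBounded S) (hne : S.Nonempty)
    {θ : ℝ} (hθ : θ ∈ Ioo (0:ℝ) 1) : sInf S + θ * (sSup S - sInf S) ∈ S := by
  rcases eq_or_lt_of_le (sInf_le_sSup_of_bounded hb hne) with h | h
  · obtain ⟨y, hy⟩ := hne
    have hy' : y = sInf S := le_antisymm (h ▸ le_csSup hb.bddAbove hy) (csInf_le hb.bddBelow hy)
    have : sInf S + θ * (sSup S - sInf S) = sInf S := by rw [← h]; ring
    rw [this, ← hy']; exact hy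
  · apply Ioo_subset_of_convex hS hne
    constructor
    · nlinarith [hθ.1, hθ.2]
    · nlinarith [hθ.1, hθ.2]

/-- superlevel sets of the width function are convex -/
lemma superlevel_convex {A : Set (ℝ × ℝ)} (hA : IsCompact A) (hAc : Convex ℝ A) {τ : ℝ}
    (hτ : 0 ≤ τ) : Convex ℝ {x | τ < wdt A x} := by
  intro x₁ h₁ x₂ h₂ a b ha hb hab
  simp only [mem_setOf_eq, smul_eq_mul] at *
  rcases eq_or_lt_of_le ha with rfl | ha'
  · simp only [zero_add] at hab; subst hab; simpa using h₂
  rcases eq_or_lt_of_le hb with rfl | hb'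
  · simp only [add_zero] at hab; subst hab; simpa using h₁
  have hne₁ : (slc A x₁).Nonempty := slc_nonempty_of_wdt_pos (lt_of_le_of_lt hτ h₁)
  have hne₂ : (slc A x₂).Nonempty := slc_nonempty_of_wdt_pos (lt_of_le_of_lt hτ h₂)
  have := wdt_combo hA hAc hA hAc hA hAc ha hb hab
    (fun p hp q hq => hAc hp hq ha hb hab) hne₁ hne₂
  nlinarith

lemma superlevel_bounded {A : Set (ℝ × ℝ)} (hA : IsCompact A) {τ : ℝ} (hτ : 0 ≤ τ) :
    IsBounded {x | τ < wdt A x} := by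
  apply ((hA.image continuous_fst).isBounded).subset
  intro x hx
  simp only [mem_setOf_eq] at hx
  obtain ⟨y, hy⟩ := slc_nonempty_of_wdt_pos (lt_of_le_of_lt hτ hx)
  exact ⟨(x, y), hy, rfl⟩

/-- key superlevel measure inequality -/
lemma meas_superlevel_combo {A B C : Set (ℝ × ℝ)} (hA : IsCompact A) (hAc : Convex ℝ A)
    (hB : IsCompact B) (hBc : Convex ℝ B) (hC : IsCompact C) (hCc : Convex ℝ C)
    {a b : ℝ} (ha : 0 < a) (hb : 0 < b) (hab : a + b = 1)
    (hP : ∀ p ∈ A, ∀ q ∈ B, a • p + b • q ∈ C)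
    {τ₁ τ₂ : ℝ} (hτ₁ : 0 ≤ τ₁) (hτ₂ : 0 ≤ τ₂)
    (hS₁ : {x | τ₁ < wdt A x}.Nonempty) (hS₂ : {x | τ₂ < wdt B x}.Nonempty) :
    ENNReal.ofReal a * volume {x | τ₁ < wdt A x} + ENNReal.ofReal b * volume {x | τ₂ < wdt B x}
      ≤ volume {x | a * τ₁ + b * τ₂ < wdt C x} := by
  set S₁ := {x | τ₁ < wdt A x} with hS₁def
  set S₂ := {x | τ₂ < wdt B x} with hS₂def
  have hS₁c : Convex ℝ S₁ := superlevel_convex hA hAc hτ₁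
  have hS₂c : Convex ℝ S₂ := superlevel_convex hB hBc hτ₂
  have hS₁b : IsBounded S₁ := superlevel_bounded hA hτ₁
  have hS₂b : IsBounded S₂ := superlevel_bounded hB hτ₂
  set i₁ := sInf S₁; set s₁ := sSup S₁; set i₂ := sInf S₂; set s₂ := sSup S₂
  -- the interval inclusion
  have hsub : Ioo (a * i₁ + b * i₂) (a * s₁ + b * s₂) ⊆ {x | a * τ₁ + b * τ₂ < wdt C x} := by
    intro u hu
    have hLU : a * i₁ + b * i₂ < a * s₁ + b * s₂ := hu.1.trans hu.2
    set L := a * i₁ + b * i₂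
    set U := a * s₁ + b * s₂
    set θ := (u - L) / (U - L) with hθdef
    have hUL : 0 < U - L := sub_pos.2 hLU
    have hθ : θ ∈ Ioo (0:ℝ) 1 := ⟨div_pos (sub_pos.2 hu.1) hUL, (div_lt_one hUL).2 (by linarith [hu.2])⟩
    set x₁ := i₁ + θ * (s₁ - i₁) with hx₁def
    set x₂ := i₂ + θ * (s₂ - i₂) with hx₂def
    have hx₁ : x₁ ∈ S₁ := mem_of_convex_interp hS₁c hS₁b hS₁ hθ
    have hx₂ : x₂ ∈ S₂ := mem_of_convex_interp hS₂c hS₂b hS₂ hθ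
    have hcomb : a * x₁ + b * x₂ = u := by
      have h1 : θ * (U - L) = u - L := div_mul_cancel₀ _ hUL.ne'
      have h2 : a * x₁ + b * x₂ = L + θ * (U - L) := by
        simp only [hx₁def, hx₂def, L, U]; ring
      rw [h2, h1]; ring
    have hne₁ : (slc A x₁).Nonempty := slc_nonempty_of_wdt_pos (lt_of_le_of_lt hτ₁ hx₁)
    have hne₂ : (slc B x₂).Nonempty := slc_nonempty_of_wdt_pos (lt_of_le_of_lt hτ₂ hx₂)
    have hcombo := wdt_combo hA hAc hB hBc hC hCc ha.le hb.le hab hP hne₁ hne₂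
    simp only [mem_setOf_eq]
    rw [← hcomb]
    have h₁' : τ₁ < wdt A x₁ := hx₁
    have h₂' : τ₂ < wdt B x₂ := hx₂
    nlinarith
  calc ENNReal.ofReal a * volume S₁ + ENNReal.ofReal b * volume S₂
      = ENNReal.ofReal (a * (s₁ - i₁)) + ENNReal.ofReal (b * (s₂ - i₂)) := by
        rw [volume_convex hS₁c hS₁b hS₁, volume_convex hS₂c hS₂b hS₂,
          ← ENNReal.ofReal_mul ha.le, ← ENNReal.ofReal_mul hb.le]
    _ = ENNReal.ofReal ((a * s₁ + b * s₂) - (a * i₁ + b * i₂)) := by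
        rw [← ENNReal.ofReal_add (by nlinarith [sInf_le_sSup_of_bounded hS₁b hS₁])
          (by nlinarith [sInf_le_sSup_of_bounded hS₂b hS₂])]
        ring_nf
    _ = volume (Ioo (a * i₁ + b * i₂) (a * s₁ + b * s₂)) := Real.volume_Ioo.symm
    _ ≤ volume {x | a * τ₁ + b * τ₂ < wdt C x} := measure_mono hsub


lemma measurable_vol_slc {A : Set (ℝ × ℝ)} (hA : MeasurableSet A) :
    Measurable fun x => volume (slc A x) :=
  measurable_measure_prodMk_left hA

lemma measurable_wdt {A : Set (ℝ × ℝ)} (hA : MeasurableSet A) : Measurable (wdt A) :=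
  (measurable_vol_slc hA).ennreal_toReal

/-- Fubini -/
lemma volume_eq_lintegral_wdt {A : Set (ℝ × ℝ)} (hA : IsCompact A) :
    volume A = ∫⁻ x, ENNReal.ofReal (wdt A x) := by
  have hmA : MeasurableSet A := hA.isClosed.measurableSet
  rw [show (volume : Measure (ℝ × ℝ)) = (volume : Measure ℝ).prod volume from
    Measure.volume_eq_prod ℝ ℝ, Measure.prod_apply hmA]
  refine lintegral_congr fun x => ?_
  rw [wdt, ENNReal.ofReal_toReal (isCompact_slc hA x).measure_lt_top.ne]
  rfl

/-- Layer cake -/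
lemma volume_eq_layercake {A : Set (ℝ × ℝ)} (hA : IsCompact A) :
    volume A = ∫⁻ τ in Ioi (0:ℝ), volume {x | τ < wdt A x} := by
  rw [volume_eq_lintegral_wdt hA]
  exact lintegral_eq_lintegral_meas_lt volume (Filter.Eventually.of_forall fun x => wdt_nonneg A x)
    (measurable_wdt hA.isClosed.measurableSet).aemeasurable

lemma antitone_meas {A : Set (ℝ × ℝ)} : Antitone fun τ : ℝ => volume {x | τ < wdt A x} :=
  fun τ τ' h => measure_mono fun x hx => lt_of_le_of_lt h hx

/-- restrict layer cake integral to `Ioo 0 M` when widths are bounded by `M` -/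
lemma layercake_restrict {A : Set (ℝ × ℝ)} {M : ℝ} (hM0 : 0 < M) (hM : ∀ x, wdt A x ≤ M) :
    ∫⁻ τ in Ioi (0:ℝ), volume {x | τ < wdt A x}
      = ∫⁻ τ in Ioo (0:ℝ) M, volume {x | τ < wdt A x} := by
  have hsplit : Ioi (0:ℝ) = Ioo 0 M ∪ Ici M := by
    ext τ
    simp only [mem_Ioi, mem_union, mem_Ioo, mem_Ici]
    constructor
    · intro h; rcases lt_or_ge τ M with h' | h'
      · exact Or.inl ⟨h, h'⟩
      · exact Or.inr h'
    · rintro (⟨h, _⟩ | h)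
      · exact h
      · linarith
  have hdisj : Disjoint (Ioo (0:ℝ) M) (Ici M) :=
    Set.disjoint_left.2 fun τ hτ h => absurd hτ.2 (not_lt.2 h)
  rw [hsplit, lintegral_union measurableSet_Ici hdisj]
  have hzero : ∫⁻ τ in Ici M, volume {x | τ < wdt A x} = 0 := by
    rw [setLIntegral_congr_fun measurableSet_Ici
      (fun τ (hτ : τ ∈ Ici M) => ?_), lintegral_zero]
    have : {x | τ < wdt A x} = ∅ := by
      ext x; simp only [mem_setOf_eq, mem_empty_iff_false, iff_false, not_lt]
      exact (hM x).trans hτ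
    rw [this]
    exact measure_empty
  rw [hzero, add_zero]

/-- change of variables -/
lemma lintegral_scale {m : ℝ → ℝ≥0∞} (hm : Measurable m) {c M : ℝ} (hc : 0 < c) :
    ∫⁻ τ in Ioo (0:ℝ) M, m (c * τ)
      = ENNReal.ofReal c⁻¹ * ∫⁻ τ in Ioo (0:ℝ) (c * M), m τ := by
  have hmap := Real.map_volume_mul_left hc.ne'
  have h1 : ∫⁻ y in Ioo (0:ℝ) (c * M), m y ∂(Measure.map (fun x => c * x) volume)
      = ∫⁻ x in (fun x => c * x) ⁻¹' Ioo (0:ℝ) (c * M), m (c * x) := by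
    exact setLIntegral_map measurableSet_Ioo hm (measurable_const_mul c)
  have hpre : (fun x => c * x) ⁻¹' Ioo (0:ℝ) (c * M) = Ioo 0 M := by
    rw [Set.preimage_const_mul_Ioo₀ _ _ hc, zero_div, mul_div_cancel_left₀ _ hc.ne']
  rw [hpre] at h1
  rw [← h1, hmap]
  rw [Measure.restrict_smul, lintegral_smul_measure, abs_of_pos (inv_pos.2 hc), smul_eq_mul]


lemma wdt_bddAbove {A : Set (ℝ × ℝ)} (hA : IsCompact A) : BddAbove (Set.range (wdt A)) := by
  obtain ⟨R, hR⟩ := hA.isBounded.subset_closedBall 0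
  refine ⟨(volume (Icc (-R) R)).toReal, ?_⟩
  rintro w ⟨x, rfl⟩
  have hsub : slc A x ⊆ Icc (-R) R := by
    intro y hy
    have h := hR hy
    rw [Metric.mem_closedBall] at h
    have h2 : dist y (0:ℝ) ≤ R := by
      rw [Prod.dist_eq] at h
      exact le_trans (le_max_right _ _) h
    rw [Real.dist_eq, sub_zero] at h2
    exact abs_le.1 h2
  exact ENNReal.toReal_mono (by rw [Real.volume_Icc]; exact ENNReal.ofReal_ne_top)
    (measure_mono hsub)

/-- The key quasi-concavity lemma. -/
lemma key_lemma {A B C : Set (ℝ × ℝ)} (hA : IsCompact A) (hAc : Convex ℝ A)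
    (hB : IsCompact B) (hBc : Convex ℝ B) (hC : IsCompact C) (hCc : Convex ℝ C)
    {a b : ℝ} (ha : 0 < a) (hb : 0 < b) (hab : a + b = 1)
    (hP : ∀ p ∈ A, ∀ q ∈ B, a • p + b • q ∈ C)
    {α : ℝ} (hα : 0 < α) (hVA : ENNReal.ofReal α ≤ volume A)
    (hVB : ENNReal.ofReal α ≤ volume B) : ENNReal.ofReal α ≤ volume C := by
  have hmA : MeasurableSet A := hA.isClosed.measurableSet
  have hmB : MeasurableSet B := hB.isClosed.measurableSet
  -- the max-width values
  set MA := sSup (Set.range (wdt A)) with hMAdef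
  set MB := sSup (Set.range (wdt B)) with hMBdef
  have hbddA := wdt_bddAbove hA
  have hbddB := wdt_bddAbove hB
  have hwleA : ∀ x, wdt A x ≤ MA := fun x => le_csSup hbddA (Set.mem_range_self x)
  have hwleB : ∀ x, wdt B x ≤ MB := fun x => le_csSup hbddB (Set.mem_range_self x)
  -- positivity of MA, MB
  have hex : ∀ {D : Set (ℝ × ℝ)}, IsCompact D → ENNReal.ofReal α ≤ volume D →
      ∃ x, 0 < wdt D x := by
    intro D hD hVD
    by_contra h
    push_neg at h
    have h0 : ∀ x, wdt D x = 0 := fun x => le_antisymm (h x) (wdt_nonneg D x)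
    have : volume D = 0 := by
      rw [volume_eq_lintegral_wdt hD]
      simp [h0]
    rw [this] at hVD
    simp only [nonpos_iff_eq_zero, ENNReal.ofReal_eq_zero] at hVD
    linarith
  obtain ⟨xA, hxA⟩ := hex hA hVA
  obtain ⟨xB, hxB⟩ := hex hB hVB
  have hMA : 0 < MA := lt_of_lt_of_le hxA (hwleA xA)
  have hMB : 0 < MB := lt_of_lt_of_le hxB (hwleB xB)
  set M := a * MA + b * MB with hMdef
  have hM : 0 < M := by positivity
  set cA := MA / M with hcAdef
  set cB := MB / M with hcBdef
  have hcA : 0 < cA := div_pos hMA hM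
  have hcB : 0 < cB := div_pos hMB hM
  -- measurability of the layer functions
  have hantA : Antitone fun τ : ℝ => volume {x | τ < wdt A x} := antitone_meas
  have hantB : Antitone fun τ : ℝ => volume {x | τ < wdt B x} := antitone_meas
  have hmesA : Measurable fun τ : ℝ => volume {x | τ < wdt A x} := hantA.measurable
  have hmesB : Measurable fun τ : ℝ => volume {x | τ < wdt B x} := hantB.measurable
  -- pointwise superlevel bound on Ioo 0 M
  have hpoint : ∀ τ ∈ Ioo (0:ℝ) M,
      ENNReal.ofReal a * volume {x | cA * τ < wdt A x}
        + ENNReal.ofReal b * volume {x | cB * τ < wdt B x}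
      ≤ volume {x | τ < wdt C x} := by
    intro τ hτ
    have hτ1 : (0:ℝ) ≤ cA * τ := mul_nonneg hcA.le hτ.1.le
    have hτ2 : (0:ℝ) ≤ cB * τ := mul_nonneg hcB.le hτ.1.le
    have hlt1 : cA * τ < MA := by
      rw [hcAdef]
      calc MA / M * τ < MA / M * M := by
            apply mul_lt_mul_of_pos_left hτ.2 (div_pos hMA hM)
        _ = MA := by field_simp
    have hlt2 : cB * τ < MB := by
      rw [hcBdef]
      calc MB / M * τ < MB / M * M := by
            apply mul_lt_mul_of_pos_left hτ.2 (div_pos hMB hM)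
        _ = MB := by field_simp
    have hne1 : {x | cA * τ < wdt A x}.Nonempty := by
      obtain ⟨w, ⟨x, rfl⟩, hw⟩ := exists_lt_of_lt_csSup ⟨wdt A 0, Set.mem_range_self 0⟩ hlt1
      exact ⟨x, hw⟩
    have hne2 : {x | cB * τ < wdt B x}.Nonempty := by
      obtain ⟨w, ⟨x, rfl⟩, hw⟩ := exists_lt_of_lt_csSup ⟨wdt B 0, Set.mem_range_self 0⟩ hlt2
      exact ⟨x, hw⟩
    have hτeq : a * (cA * τ) + b * (cB * τ) = τ := by
      rw [hcAdef, hcBdef]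
      field_simp
      ring
    have := meas_superlevel_combo hA hAc hB hBc hC hCc ha hb hab hP hτ1 hτ2 hne1 hne2
    rwa [hτeq] at this
  -- assemble
  have hVC : volume C ≥ ENNReal.ofReal a * (ENNReal.ofReal cA⁻¹ * volume A)
      + ENNReal.ofReal b * (ENNReal.ofReal cB⁻¹ * volume B) := by
    have step1 : volume C ≥ ∫⁻ τ in Ioo (0:ℝ) M, volume {x | τ < wdt C x} := by
      rw [volume_eq_layercake hC]
      exact lintegral_mono_set fun τ hτ => hτ.1
    have step2 : ∫⁻ τ in Ioo (0:ℝ) M, volume {x | τ < wdt C x}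
        ≥ ∫⁻ τ in Ioo (0:ℝ) M,
            (ENNReal.ofReal a * volume {x | cA * τ < wdt A x}
              + ENNReal.ofReal b * volume {x | cB * τ < wdt B x}) :=
      setLIntegral_mono' measurableSet_Ioo hpoint
    have step3 : ∫⁻ τ in Ioo (0:ℝ) M,
        (ENNReal.ofReal a * volume {x | cA * τ < wdt A x}
          + ENNReal.ofReal b * volume {x | cB * τ < wdt B x})
        = ENNReal.ofReal a * (∫⁻ τ in Ioo (0:ℝ) M, volume {x | cA * τ < wdt A x})
          + ENNReal.ofReal b * (∫⁻ τ in Ioo (0:ℝ) M, volume {x | cB * τ < wdt B x}) := by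
      have hA' : Measurable fun τ : ℝ => volume {x | cA * τ < wdt A x} :=
        hmesA.comp (measurable_const_mul cA)
      have hB' : Measurable fun τ : ℝ => volume {x | cB * τ < wdt B x} :=
        hmesB.comp (measurable_const_mul cB)
      rw [lintegral_add_left (hA'.const_mul _), lintegral_const_mul _ hA',
        lintegral_const_mul _ hB']
    have cvA : ∫⁻ τ in Ioo (0:ℝ) M, volume {x | cA * τ < wdt A x}
        = ENNReal.ofReal cA⁻¹ * volume A := by
      rw [lintegral_scale hmesA hcA]
      congr 1
      have : cA * M = MA := by rw [hcAdef]; field_simp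
      rw [this, ← layercake_restrict hMA hwleA, ← volume_eq_layercake hA]
    have cvB : ∫⁻ τ in Ioo (0:ℝ) M, volume {x | cB * τ < wdt B x}
        = ENNReal.ofReal cB⁻¹ * volume B := by
      rw [lintegral_scale hmesB hcB]
      congr 1
      have : cB * M = MB := by rw [hcBdef]; field_simp
      rw [this, ← layercake_restrict hMB hwleB, ← volume_eq_layercake hB]
    calc volume C ≥ ∫⁻ τ in Ioo (0:ℝ) M, volume {x | τ < wdt C x} := step1
      _ ≥ _ := step2
      _ = _ := step3
      _ = _ := by rw [cvA, cvB]
  -- final arithmetic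
  have hsum : 1 ≤ a * cA⁻¹ + b * cB⁻¹ := by
    rw [hcAdef, hcBdef, inv_div, inv_div]
    have h1 : a * (M / MA) + b * (M / MB) = (a * M * MB + b * M * MA) / (MA * MB) := by
      field_simp
    rw [h1, le_div_iff₀ (mul_pos hMA hMB)]
    have expand : a * M * MB + b * M * MA = MA * MB + a * b * (MA - MB)^2 := by
      rw [hMdef]
      linear_combination MA * MB * (a + b + 1) * hab
    rw [expand]
    nlinarith [mul_pos ha hb, sq_nonneg (MA - MB)]
  calc ENNReal.ofReal α = ENNReal.ofReal (1 * α) := by rw [one_mul]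
    _ ≤ ENNReal.ofReal ((a * cA⁻¹ + b * cB⁻¹) * α) :=
        ENNReal.ofReal_le_ofReal (by nlinarith [hα, hsum])
    _ = ENNReal.ofReal (a * cA⁻¹ * α) + ENNReal.ofReal (b * cB⁻¹ * α) := by
        rw [← ENNReal.ofReal_add (mul_nonneg (mul_nonneg ha.le (inv_nonneg.2 hcA.le)) hα.le)
          (mul_nonneg (mul_nonneg hb.le (inv_nonneg.2 hcB.le)) hα.le)]
        ring_nf
    _ = ENNReal.ofReal a * (ENNReal.ofReal cA⁻¹ * ENNReal.ofReal α)
          + ENNReal.ofReal b * (ENNReal.ofReal cB⁻¹ * ENNReal.ofReal α) := by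
        rw [mul_assoc a, mul_assoc b, ENNReal.ofReal_mul ha.le, ENNReal.ofReal_mul hb.le,
          ENNReal.ofReal_mul (inv_nonneg.2 hcA.le), ENNReal.ofReal_mul (inv_nonneg.2 hcB.le)]
    _ ≤ ENNReal.ofReal a * (ENNReal.ofReal cA⁻¹ * volume A)
          + ENNReal.ofReal b * (ENNReal.ofReal cB⁻¹ * volume B) := by
        gcongr
    _ ≤ volume C := hVC


end OverlapAux


namespace OverlapAux

def psi : Plane ≃ᵐ ℝ × ℝ :=
  (MeasurableEquiv.toLp 2 (Fin 2 → ℝ)).symm.trans (MeasurableEquiv.piFinTwo fun _ => ℝ)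

lemma psi_apply (v : Plane) : psi v = (v 0, v 1) := rfl

lemma psi_mp : MeasurePreserving psi volume volume :=
  (volume_preserving_piFinTwo fun _ => ℝ).comp
    (EuclideanSpace.volume_preserving_symm_measurableEquiv_toLp (Fin 2))

lemma psi_linear : IsLinearMap ℝ psi := by
  constructor
  · intro v w; rfl
  · intro c v; rfl

lemma psi_continuous : Continuous psi := by
  have : (psi : Plane → ℝ × ℝ) = fun v => (v 0, v 1) := funext psi_apply
  rw [this]
  fun_prop

lemma psi_volume {W : Set Plane} (hW : MeasurableSet W) : volume (psi '' W) = volume W := by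
  rw [MeasurableEquiv.image_eq_preimage_symm]
  exact (MeasurePreserving.symm psi psi_mp).measure_preimage hW.nullMeasurableSet

end OverlapAux

open OverlapAux

theorem overlap_superlevel_convex (X Y : Set Plane)
    (hXcomp : IsCompact X) (hXconv : Convex ℝ X)
    (hYcomp : IsCompact Y) (hYconv : Convex ℝ Y) (α : ℝ) :
    Convex ℝ {t : Plane | α ≤ (volume (X ∩ (t +ᵥ Y))).toReal} := by
  rcases le_or_gt α 0 with hα | hα
  · intro t₁ _ t₂ _ a b _ _ _
    exact hα.trans ENNReal.toReal_nonneg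
  intro t₁ ht₁ t₂ ht₂ a b ha hb hab
  rcases eq_or_lt_of_le ha with rfl | ha'
  · simp only [zero_add] at hab; subst hab; simpa using ht₂
  rcases eq_or_lt_of_le hb with rfl | hb'
  · simp only [add_zero] at hab; subst hab; simpa using ht₁
  -- general facts about the three bodies
  have hbody : ∀ t : Plane, IsCompact (X ∩ (t +ᵥ Y)) ∧ Convex ℝ (X ∩ (t +ᵥ Y)) := by
    intro t
    have hcomp : IsCompact (t +ᵥ Y) := by
      rw [← Set.image_vadd]
      exact hYcomp.image (continuous_const_vadd t)
    constructor
    · exact hXcomp.inter_right hcomp.isClosed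
    · exact hXconv.inter (hYconv.vadd t)
  set t := a • t₁ + b • t₂ with htdef
  -- the combination property
  have hP : ∀ p ∈ X ∩ (t₁ +ᵥ Y), ∀ q ∈ X ∩ (t₂ +ᵥ Y), a • p + b • q ∈ X ∩ (t +ᵥ Y) := by
    rintro p ⟨hpX, hpY⟩ q ⟨hqX, hqY⟩
    refine ⟨hXconv hpX hqX ha hb hab, ?_⟩
    obtain ⟨y₁, hy₁, hpe⟩ := hpY
    obtain ⟨y₂, hy₂, hqe⟩ := hqY
    refine ⟨a • y₁ + b • y₂, hYconv hy₁ hy₂ ha hb hab, ?_⟩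
    rw [← hpe, ← hqe]
    simp only [vadd_eq_add, htdef, smul_add]
    abel
  -- transfer to ℝ × ℝ
  have hP' : ∀ p ∈ psi '' (X ∩ (t₁ +ᵥ Y)), ∀ q ∈ psi '' (X ∩ (t₂ +ᵥ Y)),
      a • p + b • q ∈ psi '' (X ∩ (t +ᵥ Y)) := by
    rintro _ ⟨p, hp, rfl⟩ _ ⟨q, hq, rfl⟩
    exact ⟨a • p + b • q, hP p hp q hq,
      by rw [psi_linear.map_add, psi_linear.map_smul, psi_linear.map_smul]⟩
  have key := key_lemma
    ((hbody t₁).1.image psi_continuous) ((hbody t₁).2.is_linear_image psi_linear)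
    ((hbody t₂).1.image psi_continuous) ((hbody t₂).2.is_linear_image psi_linear)
    ((hbody t).1.image psi_continuous) ((hbody t).2.is_linear_image psi_linear)
    ha' hb' hab hP' hα
    (by rw [psi_volume (hbody t₁).1.isClosed.measurableSet]
        exact ENNReal.ofReal_le_of_le_toReal ht₁)
    (by rw [psi_volume (hbody t₂).1.isClosed.measurableSet]
        exact ENNReal.ofReal_le_of_le_toReal ht₂)
  rw [psi_volume (hbody t).1.isClosed.measurableSet] at key
  show α ≤ (volume (X ∩ (t +ᵥ Y))).toReal
  rw [← ENNReal.ofReal_le_iff_le_toReal (hbody t).1.measure_lt_top.ne]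
  exact key
end
end

section
/- Let K be a nonempty convex subset of ℝ² contained in the unit square [0,1]². Then there exists a point c ∈ ℝ² such that the closed disk of radius area(K)/8 centered at c is contained in K. -/
open MeasureTheory Pointwise

noncomputable section

open Set

lemma cross_le (z0 z1 w0 w1 : ℝ) :
    |z0 * w1 - z1 * w0| ≤ Real.sqrt (z0^2 + z1^2) * Real.sqrt (w0^2 + w1^2) := by
  have h1 : |z0 * w1 - z1 * w0| = Real.sqrt ((z0 * w1 - z1 * w0)^2) := (Real.sqrt_sq_eq_abs _).symm
  rw [h1, ← Real.sqrt_mul (by positivity)]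
  apply Real.sqrt_le_sqrt
  nlinarith [sq_nonneg (z0 * w0 + z1 * w1)]

lemma sqrt_pair_le (x y : ℝ) : Real.sqrt (x^2 + y^2) ≤ |x| + |y| := by
  have h : |x| + |y| = Real.sqrt ((|x| + |y|)^2) := by
    rw [Real.sqrt_sq (by positivity)]
  rw [h]
  apply Real.sqrt_le_sqrt
  have := abs_nonneg x; have := abs_nonneg y
  nlinarith [sq_abs x, sq_abs y, mul_nonneg (abs_nonneg x) (abs_nonneg y)]

lemma sqrt_pair_lt {x y : ℝ} (hx : x ≠ 0) (hy : y ≠ 0) :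
    Real.sqrt (x^2 + y^2) < |x| + |y| := by
  have h : |x| + |y| = Real.sqrt ((|x| + |y|)^2) := by
    rw [Real.sqrt_sq (by positivity)]
  rw [h]
  apply Real.sqrt_lt_sqrt (by positivity)
  have h1 : 0 < |x| := abs_pos.2 hx
  have h2 : 0 < |y| := abs_pos.2 hy
  nlinarith [sq_abs x, sq_abs y]

lemma abs3 {a b c : ℝ} (ha : a ∈ Icc (0:ℝ) 1) (hb : b ∈ Icc (0:ℝ) 1) (hc : c ∈ Icc (0:ℝ) 1) :
    |a - b| + |b - c| + |c - a| ≤ 2 := by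
  obtain ⟨ha0, ha1⟩ := ha; obtain ⟨hb0, hb1⟩ := hb; obtain ⟨hc0, hc1⟩ := hc
  rcases abs_cases (a - b) with ⟨h1, _⟩ | ⟨h1, _⟩ <;>
  rcases abs_cases (b - c) with ⟨h2, _⟩ | ⟨h2, _⟩ <;>
  rcases abs_cases (c - a) with ⟨h3, _⟩ | ⟨h3, _⟩ <;> linarith

lemma cpos {u0 u1 v0 v1 : ℝ} (hS : u0 * v1 - u1 * v0 ≠ 0) : 0 < Real.sqrt (u0^2 + u1^2) := by
  apply Real.sqrt_pos.2
  rcases eq_or_ne u0 0 with h | h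
  · have : u1 ≠ 0 := by intro h1; apply hS; rw [h, h1]; ring
    positivity
  · positivity

lemma perim_lt {u0 u1 v0 v1 : ℝ} (hS : u0 * v1 - u1 * v0 ≠ 0)
    (k0 : |u0| + |v0 - u0| + |v0| ≤ 2) (k1 : |u1| + |v1 - u1| + |v1| ≤ 2) :
    Real.sqrt ((v0-u0)^2 + (v1-u1)^2) + Real.sqrt (v0^2 + v1^2) + Real.sqrt (u0^2 + u1^2) < 4 := by
  have l1a : Real.sqrt ((v0-u0)^2 + (v1-u1)^2) ≤ |v0 - u0| + |v1 - u1| := sqrt_pair_le _ _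
  have l1b : Real.sqrt (v0^2 + v1^2) ≤ |v0| + |v1| := sqrt_pair_le _ _
  have l1c : Real.sqrt (u0^2 + u1^2) ≤ |u0| + |u1| := sqrt_pair_le _ _
  by_cases h1 : u0 ≠ 0 ∧ u1 ≠ 0
  · have := sqrt_pair_lt h1.1 h1.2
    linarith
  by_cases h2 : v0 ≠ 0 ∧ v1 ≠ 0
  · have := sqrt_pair_lt h2.1 h2.2
    linarith
  · push_neg at h1 h2
    have h3 : v0 - u0 ≠ 0 ∧ v1 - u1 ≠ 0 := by
      by_cases hu0z : u0 = 0
      · have hu1z : u1 ≠ 0 := by intro h; apply hS; rw [hu0z, h]; ring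
        have hv0z : v0 ≠ 0 := by intro h; apply hS; rw [hu0z, h]; ring
        have hv1z : v1 = 0 := h2 hv0z
        refine ⟨by rw [hu0z]; simpa using hv0z, by rw [hv1z]; simpa using hu1z⟩
      · have hu1z : u1 = 0 := h1 hu0z
        have hv1z : v1 ≠ 0 := by intro h; apply hS; rw [hu1z, h]; ring
        have hv0z : v0 = 0 := by by_contra h; exact hv1z (h2 h)
        refine ⟨by rw [hv0z]; simpa using hu0z, by rw [hu1z]; simpa using hv1z⟩
    have := sqrt_pair_lt h3.1 h3.2
    linarith

lemma cramer {u0 u1 v0 v1 w0 w1 S : ℝ} (hS : S ≠ 0) (hSdef : u0 * v1 - u1 * v0 = S) :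
    ((w0 * v1 - w1 * v0) / S) * u0 + ((u0 * w1 - u1 * w0) / S) * v0 = w0 ∧
    ((w0 * v1 - w1 * v0) / S) * u1 + ((u0 * w1 - u1 * w0) / S) * v1 = w1 := by
  constructor
  · field_simp; linear_combination w0 * hSdef
  · field_simp; linear_combination w1 * hSdef

lemma bary_core {u0 u1 v0 v1 w0 w1 z0 z1 a b c S r : ℝ}
    (hS : 0 < S) (hSdef : u0 * v1 - u1 * v0 = S)
    (ha : a = Real.sqrt ((v0-u0)^2 + (v1-u1)^2))
    (hb : b = Real.sqrt (v0^2 + v1^2))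
    (hc : c = Real.sqrt (u0^2 + u1^2))
    (hp : 0 < a + b + c)
    (hr : r = S / (a + b + c))
    (hz : Real.sqrt (z0^2 + z1^2) ≤ r)
    (hwz0 : w0 = z0 + (b * u0 + c * v0) / (a + b + c))
    (hwz1 : w1 = z1 + (b * u1 + c * v1) / (a + b + c)) :
    0 ≤ (w0 * v1 - w1 * v0) / S ∧ 0 ≤ (u0 * w1 - u1 * w0) / S ∧
      (w0 * v1 - w1 * v0) / S + (u0 * w1 - u1 * w0) / S ≤ 1 := by
  have hpne : a + b + c ≠ 0 := ne_of_gt hp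
  have ha0 : 0 ≤ a := ha ▸ Real.sqrt_nonneg _
  have hb0 : 0 ≤ b := hb ▸ Real.sqrt_nonneg _
  have hc0 : 0 ≤ c := hc ▸ Real.sqrt_nonneg _
  have hz0' : 0 ≤ Real.sqrt (z0^2 + z1^2) := Real.sqrt_nonneg _
  have hcr1 : |z0 * v1 - z1 * v0| ≤ r * b := by
    calc |z0 * v1 - z1 * v0| ≤ Real.sqrt (z0^2 + z1^2) * Real.sqrt (v0^2 + v1^2) :=
          cross_le _ _ _ _
    _ ≤ r * b := by rw [← hb]; exact mul_le_mul_of_nonneg_right hz hb0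
  have hcr2 : |u0 * z1 - u1 * z0| ≤ r * c := by
    have heq : |u0 * z1 - u1 * z0| = |z0 * u1 - z1 * u0| := by rw [← abs_neg]; congr 1; ring
    rw [heq]
    calc |z0 * u1 - z1 * u0| ≤ Real.sqrt (z0^2 + z1^2) * Real.sqrt (u0^2 + u1^2) :=
          cross_le _ _ _ _
    _ ≤ r * c := by rw [← hc]; exact mul_le_mul_of_nonneg_right hz hc0
  have hcr3 : |z0 * (v1 - u1) - z1 * (v0 - u0)| ≤ r * a := by
    calc |z0 * (v1 - u1) - z1 * (v0 - u0)|
        ≤ Real.sqrt (z0^2 + z1^2) * Real.sqrt ((v0-u0)^2 + (v1-u1)^2) := cross_le _ _ _ _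
    _ ≤ r * a := by rw [← ha]; exact mul_le_mul_of_nonneg_right hz ha0
  have hnum2 : w0 * v1 - w1 * v0 = (z0 * v1 - z1 * v0) + b * S / (a + b + c) := by
    rw [hwz0, hwz1]; field_simp; linear_combination b * hSdef
  have hnum3 : u0 * w1 - u1 * w0 = (u0 * z1 - u1 * z0) + c * S / (a + b + c) := by
    rw [hwz0, hwz1]; field_simp; linear_combination c * hSdef
  have hrb : b * S / (a + b + c) = r * b := by rw [hr]; field_simp
  have hrc : c * S / (a + b + c) = r * c := by rw [hr]; field_simp
  have hra : a * S / (a + b + c) = r * a := by rw [hr]; field_simp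
  have h2 : 0 ≤ w0 * v1 - w1 * v0 := by
    rw [hnum2, hrb]
    have := neg_abs_le (z0 * v1 - z1 * v0)
    linarith
  have h3 : 0 ≤ u0 * w1 - u1 * w0 := by
    rw [hnum3, hrc]
    have := neg_abs_le (u0 * z1 - u1 * z0)
    linarith
  refine ⟨div_nonneg h2 hS.le, div_nonneg h3 hS.le, ?_⟩
  rw [← add_div, div_le_one hS, hnum2, hnum3, hrb, hrc]
  have hkey : (z0 * v1 - z1 * v0) + (u0 * z1 - u1 * z0)
      = z0 * (v1 - u1) - z1 * (v0 - u0) := by ring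
  have hle := le_abs_self ((z0 * v1 - z1 * v0) + (u0 * z1 - u1 * z0))
  rw [hkey] at hle
  have hsum : r * b + r * c = S - r * a := by
    have : r * (a + b + c) = S := by rw [hr]; field_simp
    linarith [this]
  linarith [hcr3]

lemma dist_plane (x y : Plane) : dist x y = Real.sqrt ((x 0 - y 0)^2 + (x 1 - y 1)^2) := by
  rw [EuclideanSpace.dist_eq]
  simp [Fin.sum_univ_two, Real.dist_eq, sq_abs]

lemma tri_ball {T : Set Plane} (hT : Convex ℝ T) (P Q X : Plane)
    (hP : P ∈ T) (hQ : Q ∈ T) (hX : X ∈ T)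
    (hPu : ∀ i, P i ∈ Icc (0:ℝ) 1) (hQu : ∀ i, Q i ∈ Icc (0:ℝ) 1)
    (hXu : ∀ i, X i ∈ Icc (0:ℝ) 1)
    {S : ℝ} (hS : 0 < S)
    (hSdef : (Q 0 - P 0) * (X 1 - P 1) - (Q 1 - P 1) * (X 0 - P 0) = S) :
    ∃ c r, S / 4 < r ∧ Metric.closedBall c r ⊆ T := by
  have hSne : S ≠ 0 := ne_of_gt hS
  set a : ℝ := dist Q X with hadist
  set b : ℝ := dist P X with hbdist
  set c : ℝ := dist P Q with hcdist
  have ha : a = Real.sqrt (((X 0 - P 0) - (Q 0 - P 0))^2 + ((X 1 - P 1) - (Q 1 - P 1))^2) := by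
    rw [hadist, dist_plane]; congr 1; ring
  have hb : b = Real.sqrt ((X 0 - P 0)^2 + (X 1 - P 1)^2) := by
    rw [hbdist, dist_plane]; congr 1; ring
  have hc : c = Real.sqrt ((Q 0 - P 0)^2 + (Q 1 - P 1)^2) := by
    rw [hcdist, dist_plane]; congr 1; ring
  have ha0 : 0 ≤ a := dist_nonneg
  have hb0 : 0 ≤ b := dist_nonneg
  have hcpos : 0 < c := by rw [hc]; exact cpos (hSdef ▸ hSne)
  have hp : 0 < a + b + c := by linarith
  have hpne : a + b + c ≠ 0 := ne_of_gt hp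
  -- perimeter < 4
  have hperim : a + b + c < 4 := by
    rw [ha, hb, hc]
    apply perim_lt (hSdef ▸ hSne)
    · have h := abs3 (hPu 0) (hQu 0) (hXu 0)
      have e1 : |Q 0 - P 0| = |P 0 - Q 0| := abs_sub_comm _ _
      have e2 : |(X 0 - P 0) - (Q 0 - P 0)| = |Q 0 - X 0| := by rw [abs_sub_comm]; congr 1; ring
      rw [e1, e2]; linarith
    · have h := abs3 (hPu 1) (hQu 1) (hXu 1)
      have e1 : |Q 1 - P 1| = |P 1 - Q 1| := abs_sub_comm _ _
      have e2 : |(X 1 - P 1) - (Q 1 - P 1)| = |Q 1 - X 1| := by rw [abs_sub_comm]; congr 1; ring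
      rw [e1, e2]; linarith
  set r : ℝ := S / (a + b + c) with hr
  have hrpos : 0 < r := div_pos hS hp
  have hr4 : S / 4 < r := by rw [hr]; exact div_lt_div_of_pos_left hS hp hperim
  set I : Plane := (a + b + c)⁻¹ • (a • P + b • Q + c • X) with hI
  have hIc : ∀ i, I i = (a * P i + b * Q i + c * X i) / (a + b + c) := by
    intro i
    rw [hI]
    simp only [PiLp.smul_apply, PiLp.add_apply, smul_eq_mul]
    field_simp
  refine ⟨I, r, hr4, ?_⟩
  intro y hy
  rw [Metric.mem_closedBall, dist_plane] at hy
  have hwz0 : y 0 - P 0 = (y 0 - I 0)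
      + (b * (Q 0 - P 0) + c * (X 0 - P 0)) / (a + b + c) := by
    rw [hIc 0]; field_simp; ring
  have hwz1 : y 1 - P 1 = (y 1 - I 1)
      + (b * (Q 1 - P 1) + c * (X 1 - P 1)) / (a + b + c) := by
    rw [hIc 1]; field_simp; ring
  obtain ⟨hl2, hl3, hl23⟩ := bary_core hS hSdef ha hb hc hp hr hy hwz0 hwz1
  set lam2 : ℝ := ((y 0 - P 0) * (X 1 - P 1) - (y 1 - P 1) * (X 0 - P 0)) / S with hlam2
  set lam3 : ℝ := ((Q 0 - P 0) * (y 1 - P 1) - (Q 1 - P 1) * (y 0 - P 0)) / S with hlam3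
  obtain ⟨hcr0, hcr1⟩ := cramer (u0 := Q 0 - P 0) (u1 := Q 1 - P 1) (v0 := X 0 - P 0)
    (v1 := X 1 - P 1) (w0 := y 0 - P 0) (w1 := y 1 - P 1) hSne hSdef
  have h0 : y 0 = (1 - (lam2 + lam3)) * P 0 + (lam2 * Q 0 + lam3 * X 0) := by
    rw [hlam2, hlam3]; linear_combination -hcr0
  have h1 : y 1 = (1 - (lam2 + lam3)) * P 1 + (lam2 * Q 1 + lam3 * X 1) := by
    rw [hlam2, hlam3]; linear_combination -hcr1
  have hcomb : y = (1 - (lam2 + lam3)) • P + (lam2 • Q + lam3 • X) := by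
    ext i
    fin_cases i <;> simp only [PiLp.add_apply, PiLp.smul_apply, smul_eq_mul]
    · exact h0
    · exact h1
  by_cases ht : lam2 + lam3 = 0
  · have h2 : lam2 = 0 := by linarith
    have h3 : lam3 = 0 := by linarith
    rw [hcomb, h2, h3]
    simpa using hP
  · have htpos : 0 < lam2 + lam3 := lt_of_le_of_ne (by linarith) (Ne.symm ht)
    set t : ℝ := lam2 + lam3 with htd
    have hM : (lam2 / t) • Q + (lam3 / t) • X ∈ T :=
      hT hQ hX (div_nonneg hl2 htpos.le) (div_nonneg hl3 htpos.le) (by field_simp; exact htd.symm)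
    have hfin : (1 - t) • P + t • ((lam2 / t) • Q + (lam3 / t) • X) ∈ T :=
      hT hP hM (by linarith) htpos.le (by ring)
    have : (1 - t) • P + t • ((lam2 / t) • Q + (lam3 / t) • X)
        = (1 - (lam2 + lam3)) • P + (lam2 • Q + lam3 • X) := by
      rw [smul_add, smul_smul, smul_smul, mul_div_cancel₀ _ ht, mul_div_cancel₀ _ ht, htd]
    rw [hcomb, ← this]
    exact hfin
lemma volume_box (α β γ δ : ℝ) :
    volume {z : Plane | z 0 ∈ Icc α β ∧ z 1 ∈ Icc γ δ}
      = ENNReal.ofReal (β - α) * ENNReal.ofReal (δ - γ) := by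
  have e := EuclideanSpace.volume_preserving_symm_measurableEquiv_toLp (Fin 2)
  have : {z : Plane | z 0 ∈ Icc α β ∧ z 1 ∈ Icc γ δ}
      = (MeasurableEquiv.toLp 2 (Fin 2 → ℝ)).symm ⁻¹' (univ.pi ![Icc α β, Icc γ δ]) := by
    ext z
    simp [Fin.forall_fin_two]
  rw [this, e.measure_preimage]
  · rw [volume_pi_pi]
    simp [Fin.prod_univ_two, Real.volume_Icc]
  · exact (MeasurableSet.univ_pi (fun i => by fin_cases i <;> exact measurableSet_Icc)).nullMeasurableSet

lemma volume_slab (u0 u1 α β γ δ : ℝ) (hu : u0 ≠ 0) :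
    volume {y : Plane | y 0 ∈ Icc α β ∧ u0 * y 1 - u1 * y 0 ∈ Icc γ δ}
      = ENNReal.ofReal |u0|⁻¹ * (ENNReal.ofReal (β - α) * ENNReal.ofReal (δ - γ)) := by
  set f : Plane →ₗ[ℝ] Plane := Matrix.toEuclideanLin !![1, 0; -u1, u0] with hf
  have hdet : LinearMap.det f = u0 := by
    rw [hf, Matrix.toEuclideanLin_eq_toLin, LinearMap.det_toLin, Matrix.det_fin_two_of]
    ring
  have happ : ∀ (y : Plane), f y 0 = y 0 ∧ f y 1 = u0 * y 1 - u1 * y 0 := by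
    intro y
    constructor <;>
    · simp [hf, Matrix.toEuclideanLin, Matrix.mulVec, dotProduct, Fin.sum_univ_two]
      try ring
  have hset : {y : Plane | y 0 ∈ Icc α β ∧ u0 * y 1 - u1 * y 0 ∈ Icc γ δ}
      = f ⁻¹' {z : Plane | z 0 ∈ Icc α β ∧ z 1 ∈ Icc γ δ} := by
    ext y
    simp only [mem_setOf_eq, mem_preimage, (happ y).1, (happ y).2]
  rw [hset, MeasureTheory.Measure.addHaar_preimage_linearMap volume (by rw [hdet]; exact hu)]
  rw [hdet, volume_box, abs_inv]

/-- The unit square `[0,1]²` in the plane. -/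
def unitSquare : Set Plane := {p : Plane | ∀ i, p i ∈ Set.Icc (0 : ℝ) 1}

theorem big_inner_ball (K : Set Plane) (hne : K.Nonempty) (hconv : Convex ℝ K)
    (hsub : K ⊆ unitSquare) :
    ∃ c : Plane, Metric.closedBall c ((volume K).toReal / 8) ⊆ K := by
  rcases eq_or_ne ((volume K).toReal) 0 with hA0 | hAne
  · obtain ⟨c, hc⟩ := hne
    refine ⟨c, ?_⟩
    rw [hA0]
    have h8 : (0:ℝ)/8 = 0 := by norm_num
    rw [h8, Metric.closedBall_zero]
    exact Set.singleton_subset_iff.2 hc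
  · set A := (volume K).toReal with hA
    have hApos : 0 < A := lt_of_le_of_ne ENNReal.toReal_nonneg (Ne.symm hAne)
    clear_value A
    -- the unit square is closed and bounded
    have hUSclosed : IsClosed unitSquare := by
      have he : unitSquare = ⋂ i : Fin 2, (fun p : Plane => p i) ⁻¹' (Icc (0:ℝ) 1) := by
        ext p; simp [unitSquare]
      rw [he]
      exact isClosed_iInter fun i => isClosed_Icc.preimage (PiLp.continuous_apply (p := 2) (β := fun _ : Fin 2 => ℝ) i)
    have hUSbounded : Bornology.IsBounded unitSquare := by
      apply (Metric.isBounded_closedBall (x := (0:Plane)) (r := 2)).subset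
      intro p hp
      rw [Metric.mem_closedBall, dist_plane]
      have h0 : (0 : Plane) 0 = 0 := rfl
      have h1 : (0 : Plane) 1 = 0 := rfl
      rw [h0, h1, sub_zero, sub_zero]
      have := sqrt_pair_le (p 0) (p 1)
      have b0 := hp 0; have b1 := hp 1
      rw [abs_of_nonneg b0.1, abs_of_nonneg b1.1] at this
      linarith [b0.2, b1.2]
    -- interior of K is nonempty
    have hint : (interior K).Nonempty := by
      rw [hconv.interior_nonempty_iff_affineSpan_eq_top]
      by_contra hne'
      have h0 : volume K = 0 :=
        measure_mono_null (subset_affineSpan ℝ K)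
          (MeasureTheory.Measure.addHaar_affineSubspace volume _ hne')
      exact hAne (by rw [hA, h0]; simp)
    obtain ⟨x₀, hx₀⟩ := hint
    obtain ⟨ε, hεpos, hball⟩ := Metric.isOpen_iff.1 isOpen_interior x₀ hx₀
    -- closure of K
    set C := closure K with hC
    have hCconv : Convex ℝ C := hconv.closure
    have hCne : C.Nonempty := hne.closure
    have hCsub : C ⊆ unitSquare := closure_minimal hsub hUSclosed
    have hCcomp : IsCompact C :=
      Metric.isCompact_of_isClosed_isBounded isClosed_closure (hUSbounded.subset hCsub)
    have hKC : K ⊆ C := subset_closure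
    -- extremes in the first coordinate
    have hcont0 : Continuous fun y : Plane => y 0 := PiLp.continuous_apply (p := 2) (β := fun _ : Fin 2 => ℝ) 0
    obtain ⟨P, hPC, hPmin⟩ := hCcomp.exists_isMinOn hCne hcont0.continuousOn
    obtain ⟨Q, hQC, hQmax⟩ := hCcomp.exists_isMaxOn hCne hcont0.continuousOn
    -- positive horizontal extent
    have hu0pos : 0 < Q 0 - P 0 := by
      set e0 : Plane := EuclideanSpace.single (0 : Fin 2) (1:ℝ) with he0
      have hdist : ∀ σ : ℝ, |σ| < ε → x₀ + σ • e0 ∈ K := by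
        intro σ hσ
        apply interior_subset
        apply hball
        rw [Metric.mem_ball, dist_eq_norm, add_sub_cancel_left, norm_smul, he0,
          EuclideanSpace.norm_single]
        simpa using hσ
      have hc0 : ∀ σ : ℝ, (x₀ + σ • e0) 0 = x₀ 0 + σ := by
        intro σ
        simp [he0, PiLp.add_apply, PiLp.smul_apply, EuclideanSpace.single_apply]
      have habs : |ε/2| < ε := by rw [abs_of_pos (by linarith)]; linarith
      have habs' : |(-(ε/2))| < ε := by rw [abs_neg]; exact habs
      have h1 := hPmin (hKC (hdist (-(ε/2)) habs'))
      have h2 := hQmax (hKC (hdist (ε/2) habs))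
      simp only [Set.mem_setOf_eq, hc0] at h1 h2
      linarith
    -- extremes of the cross functional
    set g : Plane → ℝ := fun y => (Q 0 - P 0) * y 1 - (Q 1 - P 1) * y 0 with hg
    clear_value g
    have hgcont : Continuous g := by
      rw [hg]
      exact (continuous_const.mul (PiLp.continuous_apply (p := 2) (β := fun _ : Fin 2 => ℝ) 1)).sub
        (continuous_const.mul (PiLp.continuous_apply (p := 2) (β := fun _ : Fin 2 => ℝ) 0))
    obtain ⟨Xmx, hXmxC, hXmxmax⟩ := hCcomp.exists_isMaxOn hCne hgcont.continuousOn
    obtain ⟨Xmn, hXmnC, hXmnmin⟩ := hCcomp.exists_isMinOn hCne hgcont.continuousOn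
    -- volume bound
    have hvol : volume K ≤ ENNReal.ofReal (g Xmx - g Xmn) := by
      calc volume K ≤ volume {y : Plane | y 0 ∈ Icc (P 0) (Q 0) ∧
            (Q 0 - P 0) * y 1 - (Q 1 - P 1) * y 0 ∈ Icc (g Xmn) (g Xmx)} := by
            apply measure_mono
            intro y hy
            refine ⟨⟨hPmin (hKC hy), hQmax (hKC hy)⟩, ?_⟩
            have h1 := hXmnmin (hKC hy)
            have h2 := hXmxmax (hKC hy)
            simp only [Set.mem_setOf_eq, hg] at h1 h2 ⊢
            exact ⟨h1, h2⟩
      _ = ENNReal.ofReal |Q 0 - P 0|⁻¹ *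
            (ENNReal.ofReal (Q 0 - P 0) * ENNReal.ofReal (g Xmx - g Xmn)) :=
            volume_slab _ _ _ _ _ _ (ne_of_gt hu0pos)
      _ = ENNReal.ofReal (g Xmx - g Xmn) := by
            rw [abs_of_pos hu0pos, ← mul_assoc,
              ← ENNReal.ofReal_mul (by positivity), inv_mul_cancel₀ (ne_of_gt hu0pos),
              ENNReal.ofReal_one, one_mul]
    have hgP1 : g Xmn ≤ g P := hXmnmin hPC
    have hgP2 : g P ≤ g Xmx := hXmxmax hPC
    have hAle : A ≤ g Xmx - g Xmn := by
      rw [hA]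
      exact ENNReal.toReal_le_of_le_ofReal (by linarith) hvol
    -- the key final step
    have final : ∀ (c : Plane) (r : ℝ), A/8 < r → Metric.closedBall c r ⊆ C →
        ∃ c' : Plane, Metric.closedBall c' (A / 8) ⊆ K := by
      intro c r hr hsubC
      refine ⟨c, ?_⟩
      intro y hy
      rw [Metric.mem_closedBall] at hy
      set D := dist y x₀ with hD
      have hDpos : 0 ≤ D := dist_nonneg
      set s := (r - A/8)/(2*(D+1)) with hs
      have hs2 : s * (2*(D+1)) = r - A/8 := by rw [hs]; field_simp
      clear_value s
      have hspos : 0 < s := by nlinarith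
      set z := y + s • (y - x₀) with hz
      have hzy : dist z y = s * D := by
        rw [hz, dist_eq_norm, add_sub_cancel_left, norm_smul, Real.norm_eq_abs,
          abs_of_pos hspos, ← dist_eq_norm]
      have hsD : s * D ≤ (r - A/8)/2 := by nlinarith [hs2, hspos, hDpos]
      have hzC : z ∈ C := by
        apply hsubC
        rw [Metric.mem_closedBall]
        calc dist z c ≤ dist z y + dist y c := dist_triangle _ _ _
        _ ≤ s * D + A/8 := by rw [hzy]; linarith
        _ ≤ r := by linarith
      set t := s/(1+s) with htdef
      have ht : t ∈ Ioc (0:ℝ) 1 := by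
        constructor
        · apply div_pos hspos; linarith
        · rw [div_le_one (by linarith)]; linarith
      have hmem := hconv.add_smul_sub_mem_interior' hzC hx₀ ht
      have heq : z + t • (x₀ - z) = y := by
        rw [hz, htdef]
        have h1s : (1:ℝ) + s ≠ 0 := by linarith
        ext i
        simp only [PiLp.add_apply, PiLp.smul_apply, PiLp.sub_apply, smul_eq_mul]
        field_simp
        ring
      rw [heq] at hmem
      exact interior_subset hmem
    -- case split on which half-slab is big
    rcases le_or_gt (A/2) (g Xmx - g P) with hcase | hcase
    · have hS : 0 < g Xmx - g P := lt_of_lt_of_le (half_pos hApos) hcase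
      obtain ⟨c, r, hrS, hsub'⟩ := tri_ball hCconv P Q Xmx hPC hQC hXmxC
        (hCsub hPC) (hCsub hQC) (hCsub hXmxC) hS (by rw [hg]; ring)
      exact final c r (by linarith) hsub'
    · have hcase2 : A/2 ≤ g P - g Xmn := by linarith
      have hS : 0 < g P - g Xmn := by linarith
      obtain ⟨c, r, hrS, hsub'⟩ := tri_ball hCconv Q P Xmn hQC hPC hXmnC
        (hCsub hQC) (hCsub hPC) (hCsub hXmnC) hS (by rw [hg]; ring)
      exact final c r (by linarith) hsub'
end
end
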